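/- arXiv:2211.04851 — 10 statements merged into one kernel-verified Lean document; each statement's English description precedes it below -/
import Mathlib

section
/- Let V₁, V₂, V₃, W₁, W₂, W₃ be finite sets, Γ₁ an NS correlation over (V₂,W₁,V₁,W₂), Γ₂ an NS correlation over (V₃,W₂,V₂,W₃), and 𝓔 any channel from V₁ to W₁. Then (Γ₂*Γ₁)[𝓔] = Γ₂[Γ₁[𝓔]], i.e. for all v₃∈V₃ and w₃∈W₃, (Γ₂*Γ₁)[𝓔](w₃|v₃) = Γ₂[Γ₁[𝓔]](w₃|v₃). -/
/-- A channel from `V` to `W` : `E v w` stands for `𝓔(w|v)`. -/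
def IsChannel {V W : Type*} [Fintype W] (E : V → W → ℝ) : Prop :=
  (∀ v w, 0 ≤ E v w) ∧ ∀ v, ∑ w, E v w = 1

/-- A no-signalling correlation over `(V₂, W₁, V₁, W₂)`: `Γ v₂ w₁ v₁ w₂` stands for
`Γ(v₁, w₂ | v₂, w₁)`. -/
def IsNSCorr {V₂ W₁ V₁ W₂ : Type*} [Fintype V₁] [Fintype W₂]
    (Γ : V₂ → W₁ → V₁ → W₂ → ℝ) : Prop :=
  (∀ v₂ w₁ v₁ w₂, 0 ≤ Γ v₂ w₁ v₁ w₂) ∧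
  (∀ v₂ w₁, ∑ v₁, ∑ w₂, Γ v₂ w₁ v₁ w₂ = 1) ∧
  (∀ v₂ w₁ w₁' v₁, ∑ w₂, Γ v₂ w₁ v₁ w₂ = ∑ w₂, Γ v₂ w₁' v₁ w₂) ∧
  (∀ v₂ v₂' w₁ w₂, ∑ v₁, Γ v₂ w₁ v₁ w₂ = ∑ v₁, Γ v₂' w₁ v₁ w₂)

/-- The composition `Γ₂ * Γ₁`. -/
def nsComp {V₁ V₂ V₃ W₁ W₂ W₃ : Type*} [Fintype V₂] [Fintype W₂]
    (Γ₂ : V₃ → W₂ → V₂ → W₃ → ℝ) (Γ₁ : V₂ → W₁ → V₁ → W₂ → ℝ) :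
    V₃ → W₁ → V₁ → W₃ → ℝ :=
  fun v₃ w₁ v₁ w₃ => ∑ v₂, ∑ w₂, Γ₁ v₂ w₁ v₁ w₂ * Γ₂ v₃ w₂ v₂ w₃

/-- The channel `Γ[𝓔]` simulated by `𝓔` with the assistance of `Γ` :
`Γ[𝓔](w₂|v₂) = Σ_{v₁,w₁} Γ(v₁,w₂|v₂,w₁) 𝓔(w₁|v₁)`. -/
def simulate {V₂ W₁ V₁ W₂ : Type*} [Fintype V₁] [Fintype W₁]
    (Γ : V₂ → W₁ → V₁ → W₂ → ℝ) (E : V₁ → W₁ → ℝ) : V₂ → W₂ → ℝ :=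
  fun v₂ w₂ => ∑ v₁, ∑ w₁, Γ v₂ w₁ v₁ w₂ * E v₁ w₁

lemma sum4_comm {A B C D : Type*} [Fintype A] [Fintype B] [Fintype C] [Fintype D]
    (f : A → B → C → D → ℝ) :
    ∑ a, ∑ b, ∑ c, ∑ d, f a b c d = ∑ c, ∑ d, ∑ a, ∑ b, f a b c d := by
  conv_lhs => enter [2, a]; rw [Finset.sum_comm (f := fun b c => ∑ d, f a b c d)]
  rw [Finset.sum_comm (f := fun a c => ∑ b, ∑ d, f a b c d)]
  refine Finset.sum_congr rfl fun c _ => ?_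
  conv_lhs => enter [2, a]; rw [Finset.sum_comm (f := fun b d => f a b c d)]
  rw [Finset.sum_comm (f := fun a d => ∑ b, f a b c d)]

/-- `(Γ₂ * Γ₁)[𝓔] = Γ₂[Γ₁[𝓔]]`. -/
theorem simulate_nsComp {V₁ V₂ V₃ W₁ W₂ W₃ : Type*}
    [Fintype V₁] [Fintype V₂] [Fintype V₃] [Fintype W₁] [Fintype W₂] [Fintype W₃]
    (Γ₁ : V₂ → W₁ → V₁ → W₂ → ℝ) (Γ₂ : V₃ → W₂ → V₂ → W₃ → ℝ)
    (h₁ : IsNSCorr Γ₁) (h₂ : IsNSCorr Γ₂)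
    (E : V₁ → W₁ → ℝ) (hE : IsChannel E) :
    ∀ v₃ w₃, simulate (nsComp Γ₂ Γ₁) E v₃ w₃ = simulate Γ₂ (simulate Γ₁ E) v₃ w₃ := by
  intro v₃ w₃
  simp only [simulate, nsComp, Finset.sum_mul, Finset.mul_sum]
  rw [sum4_comm (fun v₁ w₁ v₂ w₂ => Γ₁ v₂ w₁ v₁ w₂ * Γ₂ v₃ w₂ v₂ w₃ * E v₁ w₁)]
  refine Finset.sum_congr rfl fun v₂ _ => Finset.sum_congr rfl fun w₂ _ =>
    Finset.sum_congr rfl fun v₁ _ => Finset.sum_congr rfl fun w₁ _ => ?_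
  ring
end

section
/- Let V₁, V₂, V₃, W₁, W₂, W₃ be finite sets. If Γ₁ is a quantum commuting NS correlation over (V₂,W₁,V₁,W₂) and Γ₂ is a quantum commuting NS correlation over (V₃,W₂,V₂,W₃), then the composition Γ₂*Γ₁ is a quantum commuting NS correlation over (V₃,W₁,V₁,W₃). -/
open scoped ComplexOrder
open scoped ENNReal

set_option linter.unusedSectionVars false
set_option maxHeartbeats 1000000
set_option synthInstance.maxHeartbeats 1000000

noncomputable section QCAux

namespace QCAux

variable {α : Type*} {G : Type*} [NormedAddCommGroup G] [InnerProductSpace ℂ G]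

lemma memℓp_two_iff (f : ∀ _ : α, G) :
    Memℓp f 2 ↔ Summable fun i => ‖f i‖ ^ (2 : ℕ) := by
  rw [memℓp_gen_iff (by norm_num : 0 < (2:ℝ≥0∞).toReal)]
  norm_num

lemma lp_ext {f g : lp (fun _ : α => G) 2} (h : ∀ a, f a = g a) : f = g :=
  Subtype.ext (funext h)

lemma norm_sq_eq_tsum (f : lp (fun _ : α => G) 2) :
    ‖f‖ ^ (2:ℕ) = ∑' i, ‖f i‖ ^ (2:ℕ) := by
  have := lp.norm_rpow_eq_tsum (p := 2) (by norm_num) f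
  rw [show ((2:ℝ≥0∞).toReal) = ((2:ℕ):ℝ) by norm_num] at this
  simp_rw [Real.rpow_natCast] at this
  exact this

lemma memℓp_comp (T : G →L[ℂ] G) (f : lp (fun _ : α => G) 2) :
    Memℓp (fun a => T (f a)) 2 := by
  rw [memℓp_two_iff]
  have hs : Summable fun i => ‖f i‖ ^ (2:ℕ) := (memℓp_two_iff _).1 (lp.memℓp f)
  refine Summable.of_nonneg_of_le (fun i => by positivity)
    (fun i => ?_) (hs.mul_left (‖T‖ ^ (2:ℕ)))
  calc ‖T (f i)‖ ^ (2:ℕ) ≤ (‖T‖ * ‖f i‖) ^ (2:ℕ) := by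
        gcongr; exact T.le_opNorm _
    _ = ‖T‖ ^ (2:ℕ) * ‖f i‖ ^ (2:ℕ) := by ring

/-- Componentwise action of an operator on `lp (fun _ : α => G) 2`. -/
def cwL (T : G →L[ℂ] G) : lp (fun _ : α => G) 2 →L[ℂ] lp (fun _ : α => G) 2 :=
  LinearMap.mkContinuous
    { toFun := fun f => ⟨fun a => T (f a), memℓp_comp T f⟩
      map_add' := by
        intro f g; apply lp_ext; intro a
        simp [lp.coeFn_add, Pi.add_apply]
        rfl
      map_smul' := by
        intro c f; apply lp_ext; intro a
        simp [lp.coeFn_smul, Pi.smul_apply] }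
    ‖T‖
    (by
      intro f
      refine lp.norm_le_of_tsum_le (by norm_num) (by positivity) ?_
      have h2 : ((2:ℝ≥0∞)).toReal = ((2:ℕ):ℝ) := by norm_num
      simp_rw [h2, Real.rpow_natCast]
      have hs : Summable fun i => ‖f i‖ ^ (2:ℕ) := (memℓp_two_iff _).1 (lp.memℓp f)
      calc (∑' i, ‖(fun a => T (f a)) i‖ ^ (2:ℕ))
          ≤ ∑' i, ‖T‖ ^ (2:ℕ) * ‖f i‖ ^ (2:ℕ) := by
            refine Summable.tsum_le_tsum (fun i => ?_) ?_ (hs.mul_left _)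
            · calc ‖T (f i)‖ ^ (2:ℕ) ≤ (‖T‖ * ‖f i‖) ^ (2:ℕ) := by
                    gcongr; exact T.le_opNorm _
                _ = ‖T‖ ^ (2:ℕ) * ‖f i‖ ^ (2:ℕ) := by ring
            · exact ((memℓp_two_iff _).1 (memℓp_comp T f))
        _ = ‖T‖ ^ (2:ℕ) * ∑' i, ‖f i‖ ^ (2:ℕ) := by rw [tsum_mul_left]
        _ = (‖T‖ * ‖f‖) ^ (2:ℕ) := by rw [← norm_sq_eq_tsum f]; ring)

@[simp] lemma cwL_apply (T : G →L[ℂ] G) (f : lp (fun _ : α => G) 2) (a : α) :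
    (cwL T f : ∀ _ : α, G) a = T (f a) := rfl

lemma cwL_one : cwL (1 : G →L[ℂ] G) (α := α) = 1 := by
  apply ContinuousLinearMap.ext; intro f; apply lp_ext; intro a; rfl

lemma cwL_mul (S T : G →L[ℂ] G) :
    cwL (α := α) (S ∘L T) = cwL S ∘L cwL T := by
  apply ContinuousLinearMap.ext; intro f; apply lp_ext; intro a; rfl

lemma cwL_add (S T : G →L[ℂ] G) :
    cwL (α := α) (S + T) = cwL S + cwL T := by
  apply ContinuousLinearMap.ext; intro f; apply lp_ext; intro a
  simp [lp.coeFn_add, Pi.add_apply, ContinuousLinearMap.add_apply]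

lemma cwL_zero : cwL (α := α) (0 : G →L[ℂ] G) = 0 := by
  apply ContinuousLinearMap.ext; intro f; apply lp_ext; intro a
  simp [lp.coeFn_zero, Pi.zero_apply]

lemma cwL_sum {β : Type*} (s : Finset β) (T : β → (G →L[ℂ] G)) :
    cwL (α := α) (∑ b ∈ s, T b) = ∑ b ∈ s, cwL (T b) := by
  classical
  induction s using Finset.induction_on with
  | empty => simp [cwL_zero]
  | insert _ _ h ih => rw [Finset.sum_insert h, Finset.sum_insert h, cwL_add, ih]

/-- Elementary tensors in `lp (fun _ : κ => G) 2`, where the second factor is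
an `ℓ²` sequence. -/
def tns {κ : Type*} (x : G) (y : lp (fun _ : κ => ℂ) 2) : lp (fun _ : κ => G) 2 :=
  ⟨fun k => y k • x, by
    show Memℓp _ 2
    rw [memℓp_two_iff]
    have hs : Summable fun k => ‖y k‖ ^ (2:ℕ) := (memℓp_two_iff _).1 (lp.memℓp y)
    refine Summable.of_nonneg_of_le (fun k => by positivity) (fun k => ?_)
      (hs.mul_right (‖x‖ ^ (2:ℕ)))
    rw [norm_smul]
    ring_nf
    exact le_refl _⟩

@[simp] lemma tns_apply {κ : Type*} (x : G) (y : lp (fun _ : κ => ℂ) 2) (k : κ) :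
    (tns x y : ∀ _ : κ, G) k = y k • x := rfl

lemma inner_tns {κ : Type*} (x x' : G) (y y' : lp (fun _ : κ => ℂ) 2) :
    (inner ℂ (tns x y) (tns x' y') : ℂ) = inner ℂ y y' * inner ℂ x x' := by
  rw [lp.inner_eq_tsum, lp.inner_eq_tsum (𝕜 := ℂ) y y']
  have : ∀ k, (inner ℂ ((tns x y : ∀ _ : κ, G) k) ((tns x' y' : ∀ _ : κ, G) k) : ℂ)
      = (inner ℂ (y k) (y' k) : ℂ) * inner ℂ x x' := by
    intro k
    simp only [tns_apply]
    rw [inner_smul_left, inner_smul_right]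
    simp [RCLike.inner_apply]
    ring
  rw [tsum_congr this, tsum_mul_right]

lemma cwL_tns {κ : Type*} (T : G →L[ℂ] G) (x : G) (y : lp (fun _ : κ => ℂ) 2) :
    cwL T (tns x y) = tns (T x) y := by
  apply lp_ext; intro k
  simp



variable [CompleteSpace G]

lemma cwL_adjoint (T : G →L[ℂ] G) :
    ContinuousLinearMap.adjoint (cwL (α := α) T) = cwL (ContinuousLinearMap.adjoint T) := by
  symm
  rw [ContinuousLinearMap.eq_adjoint_iff]
  intro f g
  rw [lp.inner_eq_tsum, lp.inner_eq_tsum]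
  exact tsum_congr fun a => ContinuousLinearMap.adjoint_inner_left _ _ _

section Swap

variable {ι κ : Type*}

/-- The `ℓ²` space with constant fibre `ℂ`. -/
abbrev L2 (β : Type*) : Type _ := lp (fun _ : β => ℂ) 2

lemma summable_double (f : lp (fun _ : κ => L2 ι) 2) :
    Summable (fun p : κ × ι => ‖(f p.1 : ∀ _ : ι, ℂ) p.2‖ ^ (2:ℕ)) := by
  rw [summable_prod_of_nonneg (fun p => by positivity)]
  refine ⟨fun k => (memℓp_two_iff _).1 (lp.memℓp (f k)), ?_⟩
  have h : ∀ k, (∑' i, ‖(f k : ∀ _ : ι, ℂ) i‖ ^ (2:ℕ)) = ‖f k‖ ^ (2:ℕ) :=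
    fun k => (norm_sq_eq_tsum (f k)).symm
  simp_rw [h]
  exact (memℓp_two_iff _).1 (lp.memℓp f)

lemma memℓp_col (f : lp (fun _ : κ => L2 ι) 2) (i : ι) :
    Memℓp (fun k => (f k : ∀ _ : ι, ℂ) i) 2 := by
  rw [memℓp_two_iff]
  exact (summable_double f).prod_symm.prod_factor i

/-- The transpose of a doubly-indexed `ℓ²` family. -/
def swapFun (f : lp (fun _ : κ => L2 ι) 2) : lp (fun _ : ι => L2 κ) 2 :=
  ⟨fun i => ⟨fun k => (f k : ∀ _ : ι, ℂ) i, memℓp_col f i⟩, by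
    show Memℓp _ 2
    rw [memℓp_two_iff]
    have hsum : Summable (fun p : ι × κ => ‖(f p.2 : ∀ _ : ι, ℂ) p.1‖ ^ (2:ℕ)) :=
      (summable_double f).prod_symm
    have := ((summable_prod_of_nonneg (f := fun p : ι × κ =>
      ‖(f p.2 : ∀ _ : ι, ℂ) p.1‖ ^ (2:ℕ)) (fun p => by positivity)).1 hsum).2
    convert this using 2 with i
    exact norm_sq_eq_tsum (⟨fun k => (f k : ∀ _ : ι, ℂ) i, memℓp_col f i⟩ : L2 κ)⟩

@[simp] lemma swapFun_apply (f : lp (fun _ : κ => L2 ι) 2) (i : ι) (k : κ) :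
    ((swapFun f : ∀ _ : ι, L2 κ) i : ∀ _ : κ, ℂ) k = (f k : ∀ _ : ι, ℂ) i := rfl

lemma swapFun_swapFun (f : lp (fun _ : κ => L2 ι) 2) : swapFun (swapFun f) = f := by
  apply lp_ext; intro k; apply lp_ext; intro i; rfl

lemma norm_swapFun (f : lp (fun _ : κ => L2 ι) 2) : ‖swapFun f‖ = ‖f‖ := by
  have h1 : ‖swapFun f‖ ^ (2:ℕ) = ‖f‖ ^ (2:ℕ) := by
    rw [norm_sq_eq_tsum, norm_sq_eq_tsum]
    have hsumκι := summable_double f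
    calc (∑' i, ‖(swapFun f : ∀ _ : ι, L2 κ) i‖ ^ (2:ℕ))
        = ∑' i, ∑' k, ‖(f k : ∀ _ : ι, ℂ) i‖ ^ (2:ℕ) := by
          refine tsum_congr fun i => ?_
          exact norm_sq_eq_tsum ((swapFun f : ∀ _ : ι, L2 κ) i)
      _ = ∑' k, ∑' i, ‖(f k : ∀ _ : ι, ℂ) i‖ ^ (2:ℕ) :=
          Summable.tsum_comm (f := fun k i => ‖(f k : ∀ _ : ι, ℂ) i‖ ^ (2:ℕ)) hsumκι
      _ = ∑' k, ‖f k‖ ^ (2:ℕ) := by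
          refine tsum_congr fun k => (norm_sq_eq_tsum (f k)).symm
  have := congrArg Real.sqrt h1
  rwa [Real.sqrt_sq (norm_nonneg _), Real.sqrt_sq (norm_nonneg _)] at this

/-- The transpose unitary between `lp (κ, ℓ²(ι))` and `lp (ι, ℓ²(κ))`. -/
def swapLIE : lp (fun _ : κ => L2 ι) 2 ≃ₗᵢ[ℂ] lp (fun _ : ι => L2 κ) 2 where
  toFun := swapFun
  invFun := swapFun
  left_inv := swapFun_swapFun
  right_inv := swapFun_swapFun
  map_add' f g := by
    apply lp_ext; intro i; apply lp_ext; intro k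
    simp [lp.coeFn_add, Pi.add_apply]
  map_smul' c f := by
    apply lp_ext; intro i; apply lp_ext; intro k
    simp [lp.coeFn_smul, Pi.smul_apply]
  norm_map' := norm_swapFun

@[simp] lemma swapLIE_apply (f : lp (fun _ : κ => L2 ι) 2) (i : ι) (k : κ) :
    ((swapLIE f : ∀ _ : ι, L2 κ) i : ∀ _ : κ, ℂ) k = (f k : ∀ _ : ι, ℂ) i := rfl

@[simp] lemma swapLIE_symm_apply (g : lp (fun _ : ι => L2 κ) 2) (k : κ) (i : ι) :
    ((swapLIE.symm g : ∀ _ : κ, L2 ι) k : ∀ _ : ι, ℂ) i = (g i : ∀ _ : κ, ℂ) k := rfl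

lemma swapLIE_tns (x : L2 ι) (y : L2 κ) :
    swapLIE (tns x y) = tns y x := by
  apply lp_ext; intro i; apply lp_ext; intro k
  show ((tns x y : ∀ _ : κ, L2 ι) k : ∀ _ : ι, ℂ) i = _
  simp [tns_apply, lp.coeFn_smul, Pi.smul_apply, smul_eq_mul, mul_comm]

end Swap


section RwL

variable {ι κ : Type*}

/-- Action on the second tensor factor. -/
def rwL (S : L2 κ →L[ℂ] L2 κ) :
    lp (fun _ : κ => L2 ι) 2 →L[ℂ] lp (fun _ : κ => L2 ι) 2 :=
  ((swapLIE.symm : lp (fun _ : ι => L2 κ) 2 ≃ₗᵢ[ℂ] lp (fun _ : κ => L2 ι) 2)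
      |>.toLinearIsometry.toContinuousLinearMap) ∘L (cwL S) ∘L
    (swapLIE.toLinearIsometry.toContinuousLinearMap)

lemma rwL_apply (S : L2 κ →L[ℂ] L2 κ) (f : lp (fun _ : κ => L2 ι) 2) :
    rwL S f = swapLIE.symm (cwL S (swapLIE f)) := rfl

lemma rwL_one : rwL (ι := ι) (κ := κ) (1 : L2 κ →L[ℂ] L2 κ) = 1 := by
  apply ContinuousLinearMap.ext; intro f
  rw [rwL_apply, cwL_one]
  simp

lemma rwL_mul (S T : L2 κ →L[ℂ] L2 κ) :
    rwL (ι := ι) (S ∘L T) = rwL (ι := ι) S ∘L rwL (ι := ι) T := by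
  apply ContinuousLinearMap.ext; intro f
  simp only [rwL_apply, ContinuousLinearMap.comp_apply, cwL_mul]
  rw [LinearIsometryEquiv.apply_symm_apply]

lemma rwL_add (S T : L2 κ →L[ℂ] L2 κ) :
    rwL (ι := ι) (S + T) = rwL (ι := ι) S + rwL (ι := ι) T := by
  apply ContinuousLinearMap.ext; intro f
  simp only [rwL_apply, ContinuousLinearMap.add_apply, cwL_add, map_add]

lemma rwL_zero : rwL (ι := ι) (κ := κ) 0 = 0 := by
  apply ContinuousLinearMap.ext; intro f
  rw [rwL_apply, cwL_zero]
  simp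

lemma rwL_sum {β : Type*} (s : Finset β) (T : β → (L2 κ →L[ℂ] L2 κ)) :
    rwL (ι := ι) (∑ b ∈ s, T b) = ∑ b ∈ s, rwL (ι := ι) (T b) := by
  classical
  induction s using Finset.induction_on with
  | empty => simp only [Finset.sum_empty, rwL_zero]
  | insert _ _ h ih => rw [Finset.sum_insert h, Finset.sum_insert h, rwL_add, ih]

lemma rwL_tns (S : L2 κ →L[ℂ] L2 κ) (x : L2 ι) (y : L2 κ) :
    rwL S (tns x y) = tns x (S y) := by
  rw [rwL_apply, swapLIE_tns, cwL_tns]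
  have : swapLIE (tns x (S y)) = tns (S y) x := swapLIE_tns x (S y)
  rw [← this, LinearIsometryEquiv.symm_apply_apply]

lemma rwL_adjoint (S : L2 κ →L[ℂ] L2 κ) :
    ContinuousLinearMap.adjoint (rwL (ι := ι) S) = rwL (ContinuousLinearMap.adjoint S) := by
  symm
  rw [ContinuousLinearMap.eq_adjoint_iff]
  intro f g
  rw [rwL_apply, rwL_apply]
  calc (inner ℂ (swapLIE.symm (cwL (ContinuousLinearMap.adjoint S) (swapLIE f))) g : ℂ)
      = inner ℂ (swapLIE (swapLIE.symm (cwL (ContinuousLinearMap.adjoint S) (swapLIE f))))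
          (swapLIE g) := (swapLIE.inner_map_map _ _).symm
    _ = inner ℂ (cwL (ContinuousLinearMap.adjoint S) (swapLIE f)) (swapLIE g) := by
          rw [LinearIsometryEquiv.apply_symm_apply]
    _ = inner ℂ (ContinuousLinearMap.adjoint (cwL S) (swapLIE f)) (swapLIE g) := by
          rw [cwL_adjoint]
    _ = inner ℂ (swapLIE f) (cwL S (swapLIE g)) := ContinuousLinearMap.adjoint_inner_left _ _ _
    _ = inner ℂ f (swapLIE.symm (cwL S (swapLIE g))) := by
          rw [← swapLIE.inner_map_map f (swapLIE.symm (cwL S (swapLIE g))),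
            LinearIsometryEquiv.apply_symm_apply]

end RwL

section Density

variable {α : Type*} {G : Type*} [NormedAddCommGroup G] [InnerProductSpace ℂ G]

lemma tns_single {κ : Type*} [DecidableEq κ] (x : G) (k : κ) :
    tns x (lp.single 2 k (1:ℂ)) = lp.single 2 k x := by
  apply lp_ext; intro k'
  rw [tns_apply]
  by_cases h : k' = k
  · subst h
    rw [lp.single_apply_self, lp.single_apply_self, one_smul]
  · rw [lp.single_apply_ne _ _ _ h, lp.single_apply_ne _ _ _ h, zero_smul]

lemma dense_tns_span {κ : Type*} :
    Dense (↑(Submodule.span ℂ (Set.range (fun p : G × L2 κ => tns p.1 p.2))) :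
      Set (lp (fun _ : κ => G) 2)) := by
  classical
  intro f
  have hf : HasSum (fun k : κ => lp.single 2 k (f k)) f :=
    lp.hasSum_single (by norm_num) f
  refine mem_closure_of_tendsto hf ?_
  filter_upwards with s
  refine Submodule.sum_mem _ fun k _ => ?_
  rw [show lp.single 2 k (f k) = tns (f k) (lp.single 2 k (1:ℂ)) from (tns_single _ _).symm]
  exact Submodule.subset_span ⟨(f k, lp.single 2 k (1:ℂ)), rfl⟩

end Density

section Comm

variable {ι κ : Type*}

lemma cwL_rwL_comm (T : L2 ι →L[ℂ] L2 ι) (S : L2 κ →L[ℂ] L2 κ) :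
    cwL (α := κ) T ∘L rwL (ι := ι) S = rwL (ι := ι) S ∘L cwL T := by
  refine ContinuousLinearMap.ext_on (dense_tns_span (G := L2 ι) (κ := κ)) ?_
  rintro _ ⟨⟨x, y⟩, rfl⟩
  simp only [ContinuousLinearMap.comp_apply, rwL_tns, cwL_tns]

end Comm

section Pos

variable {G : Type*} [NormedAddCommGroup G] [InnerProductSpace ℂ G] [CompleteSpace G]

lemma isPositive_of_inner (T : G →L[ℂ] G)
    (h : ∀ η, 0 ≤ (inner ℂ (T η) η : ℂ)) : T.IsPositive := by
  rw [ContinuousLinearMap.isPositive_iff_complex]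
  intro x
  have hx := h x
  rw [Complex.nonneg_iff] at hx
  constructor
  · apply Complex.ext
    · simp [RCLike.re_eq_complex_re]
    · simp only [Complex.ofReal_im]
      exact hx.2
  · simpa [RCLike.re_eq_complex_re] using hx.1

lemma exists_sqrt (T : G →L[ℂ] G) (hT : T.IsPositive) :
    ∃ C : G →L[ℂ] G, IsSelfAdjoint C ∧ C * C = T := by
  obtain ⟨C, hC, -, h2⟩ :=
    CFC.exists_sqrt_of_isSelfAdjoint_of_quasispectrumRestricts hT.isSelfAdjoint hT.spectrumRestricts
  exact ⟨C, hC, h2⟩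

end Pos

section MainPos

variable {ι κ : Type*}

lemma pos_cwL_rwL (T : L2 ι →L[ℂ] L2 ι) (S : L2 κ →L[ℂ] L2 κ)
    (hT : ∀ η, 0 ≤ (inner ℂ (T η) η : ℂ)) (hS : ∀ η, 0 ≤ (inner ℂ (S η) η : ℂ))
    (η : lp (fun _ : κ => L2 ι) 2) :
    0 ≤ (inner ℂ ((cwL T ∘L rwL (ι := ι) S) η) η : ℂ) := by
  obtain ⟨C, hC, hC2⟩ := exists_sqrt T (isPositive_of_inner T hT)
  obtain ⟨D, hD, hD2⟩ := exists_sqrt S (isPositive_of_inner S hS)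
  set X : lp (fun _ : κ => L2 ι) 2 →L[ℂ] lp (fun _ : κ => L2 ι) 2
    := cwL C ∘L rwL (ι := ι) D with hX
  have hcomm : cwL (α := κ) C ∘L rwL (ι := ι) D = rwL (ι := ι) D ∘L cwL C :=
    cwL_rwL_comm C D
  have hXsa : ContinuousLinearMap.adjoint X = X := by
    rw [hX, ContinuousLinearMap.adjoint_comp, rwL_adjoint, cwL_adjoint,
      hC.adjoint_eq, hD.adjoint_eq, ← hcomm]
  have hfact : cwL (α := κ) T ∘L rwL (ι := ι) S = X ∘L X := by
    rw [hX]
    calc cwL (α := κ) T ∘L rwL (ι := ι) S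
        = (cwL C ∘L cwL C) ∘L (rwL (ι := ι) D ∘L rwL (ι := ι) D) := by
          rw [← cwL_mul, ← rwL_mul]
          congr 1
          · rw [← hC2]; rfl
          · rw [← hD2]; rfl
      _ = (cwL C ∘L rwL (ι := ι) D) ∘L (cwL C ∘L rwL (ι := ι) D) := by
          rw [ContinuousLinearMap.comp_assoc, ContinuousLinearMap.comp_assoc,
            ← ContinuousLinearMap.comp_assoc (cwL C) (rwL (ι := ι) D),
            hcomm, ContinuousLinearMap.comp_assoc]
          rw [← hcomm]
  rw [hfact]
  have key : (inner ℂ ((X ∘L X) η) η : ℂ) = inner ℂ (X η) (X η) := by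
    rw [ContinuousLinearMap.comp_apply]
    calc (inner ℂ (X (X η)) η : ℂ)
        = inner ℂ (ContinuousLinearMap.adjoint X (X η)) η := by rw [hXsa]
      _ = inner ℂ (X η) (X η) := ContinuousLinearMap.adjoint_inner_left X η (X η)
  rw [key, inner_self_eq_norm_sq_to_K]
  rw [← RCLike.ofReal_pow]
  exact RCLike.ofReal_nonneg.mpr (sq_nonneg _)

end MainPos

section NormTns

variable {G : Type*} [NormedAddCommGroup G] [InnerProductSpace ℂ G]

lemma norm_tns {κ : Type*} (x : G) (y : lp (fun _ : κ => ℂ) 2) :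
    ‖tns x y‖ = ‖x‖ * ‖y‖ := by
  have h1 : ‖tns x y‖ ^ (2:ℕ) = (‖x‖ * ‖y‖) ^ (2:ℕ) := by
    rw [norm_sq_eq_tsum]
    have : ∀ k, ‖(tns x y : ∀ _ : κ, G) k‖ ^ (2:ℕ) = ‖y k‖ ^ (2:ℕ) * ‖x‖ ^ (2:ℕ) := by
      intro k; rw [tns_apply, norm_smul]; ring
    rw [tsum_congr this, tsum_mul_right, ← norm_sq_eq_tsum]
    ring
  have := congrArg Real.sqrt h1
  rwa [Real.sqrt_sq (norm_nonneg _), Real.sqrt_sq (by positivity)] at this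

end NormTns

section Conj

variable {H H' : Type*} [NormedAddCommGroup H] [InnerProductSpace ℂ H]
  [NormedAddCommGroup H'] [InnerProductSpace ℂ H']

/-- Conjugation of an operator by a unitary. -/
def conjCLM (U : H ≃ₗᵢ[ℂ] H') (A : H →L[ℂ] H) : H' →L[ℂ] H' :=
  (U.toLinearIsometry.toContinuousLinearMap ∘L A) ∘L
    U.symm.toLinearIsometry.toContinuousLinearMap

lemma conjCLM_apply (U : H ≃ₗᵢ[ℂ] H') (A : H →L[ℂ] H) (x : H') :
    conjCLM U A x = U (A (U.symm x)) := rfl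

lemma conjCLM_one (U : H ≃ₗᵢ[ℂ] H') : conjCLM U 1 = 1 := by
  apply ContinuousLinearMap.ext; intro x
  simp [conjCLM_apply]

lemma conjCLM_sum (U : H ≃ₗᵢ[ℂ] H') {β : Type*} (s : Finset β) (A : β → (H →L[ℂ] H)) :
    conjCLM U (∑ b ∈ s, A b) = ∑ b ∈ s, conjCLM U (A b) := by
  apply ContinuousLinearMap.ext; intro x
  simp [conjCLM_apply, ContinuousLinearMap.sum_apply, map_sum]

lemma conjCLM_mul (U : H ≃ₗᵢ[ℂ] H') (A B : H →L[ℂ] H) :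
    conjCLM U (A * B) = conjCLM U A * conjCLM U B := by
  apply ContinuousLinearMap.ext; intro x
  simp [conjCLM_apply, ContinuousLinearMap.mul_apply]

lemma conjCLM_commute (U : H ≃ₗᵢ[ℂ] H') {A B : H →L[ℂ] H} (h : Commute A B) :
    Commute (conjCLM U A) (conjCLM U B) := by
  unfold Commute SemiconjBy
  rw [← conjCLM_mul, ← conjCLM_mul, h.eq]

lemma conjCLM_inner (U : H ≃ₗᵢ[ℂ] H') (A : H →L[ℂ] H) (x : H') :
    (inner ℂ (conjCLM U A x) x : ℂ) = inner ℂ (A (U.symm x)) (U.symm x) := by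
  rw [conjCLM_apply]
  conv_lhs => rw [show x = U (U.symm x) from (U.apply_symm_apply x).symm]
  rw [U.inner_map_map, U.symm_apply_apply]

end Conj

section MulForms

variable {α : Type*} {G : Type*} [NormedAddCommGroup G] [InnerProductSpace ℂ G]

lemma cwL_mul' (S T : G →L[ℂ] G) : cwL (α := α) (S * T) = cwL S * cwL T := cwL_mul S T

lemma cwL_commute {A B : G →L[ℂ] G} (h : Commute A B) :
    Commute (cwL (α := α) A) (cwL B) := by
  unfold Commute SemiconjBy
  rw [← cwL_mul', ← cwL_mul', h.eq]

variable {ι κ : Type*}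

lemma rwL_mul' (S T : L2 κ →L[ℂ] L2 κ) :
    rwL (ι := ι) (S * T) = rwL (ι := ι) S * rwL (ι := ι) T := rwL_mul S T

lemma rwL_commute {A B : L2 κ →L[ℂ] L2 κ} (h : Commute A B) :
    Commute (rwL (ι := ι) A) (rwL (ι := ι) B) := by
  unfold Commute SemiconjBy
  rw [← rwL_mul', ← rwL_mul', h.eq]

lemma cwL_rwL_commute (T : L2 ι →L[ℂ] L2 ι) (S : L2 κ →L[ℂ] L2 κ) :
    Commute (cwL (α := κ) T) (rwL (ι := ι) S) :=
  cwL_rwL_comm T S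

end MulForms

end QCAux



/-- A quantum commuting correlation: realized by commuting POVM's `(E_{v₂,v₁})` and
`(F_{w₁,w₂})` acting on a Hilbert space and a unit vector `ξ`, via
`Γ(v₁,w₂|v₂,w₁) = ⟨E_{v₂,v₁} F_{w₁,w₂} ξ, ξ⟩`. -/
def IsQCCorr {V₂ W₁ V₁ W₂ : Type*} [Fintype V₁] [Fintype W₂]
    (Γ : V₂ → W₁ → V₁ → W₂ → ℝ) : Prop :=
  ∃ (H : Type) (_ : NormedAddCommGroup H) (_ : InnerProductSpace ℂ H) (_ : CompleteSpace H)
    (ξ : H) (E : V₂ → V₁ → H →L[ℂ] H) (F : W₁ → W₂ → H →L[ℂ] H),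
    ‖ξ‖ = 1 ∧
    (∀ v₂ v₁ (η : H), 0 ≤ (inner ℂ ((E v₂ v₁) η) η : ℂ)) ∧
    (∀ w₁ w₂ (η : H), 0 ≤ (inner ℂ ((F w₁ w₂) η) η : ℂ)) ∧
    (∀ v₂, ∑ v₁, E v₂ v₁ = 1) ∧
    (∀ w₁, ∑ w₂, F w₁ w₂ = 1) ∧
    (∀ v₂ v₁ w₁ w₂, Commute (E v₂ v₁) (F w₁ w₂)) ∧
    (∀ v₂ w₁ v₁ w₂, (Γ v₂ w₁ v₁ w₂ : ℂ) = inner ℂ ((E v₂ v₁) ((F w₁ w₂) ξ)) ξ)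

open QCAux in
lemma IsQCCorr.exists_l2 {V₂ W₁ V₁ W₂ : Type*} [Fintype V₁] [Fintype W₂]
    {Γ : V₂ → W₁ → V₁ → W₂ → ℝ} (h : IsQCCorr Γ) :
    ∃ (ι : Type) (ξ : L2 ι) (E : V₂ → V₁ → L2 ι →L[ℂ] L2 ι)
      (F : W₁ → W₂ → L2 ι →L[ℂ] L2 ι),
      ‖ξ‖ = 1 ∧
      (∀ v₂ v₁ (η : L2 ι), 0 ≤ (inner ℂ ((E v₂ v₁) η) η : ℂ)) ∧
      (∀ w₁ w₂ (η : L2 ι), 0 ≤ (inner ℂ ((F w₁ w₂) η) η : ℂ)) ∧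
      (∀ v₂, ∑ v₁, E v₂ v₁ = 1) ∧
      (∀ w₁, ∑ w₂, F w₁ w₂ = 1) ∧
      (∀ v₂ v₁ w₁ w₂, Commute (E v₂ v₁) (F w₁ w₂)) ∧
      (∀ v₂ w₁ v₁ w₂, (Γ v₂ w₁ v₁ w₂ : ℂ) = inner ℂ ((E v₂ v₁) ((F w₁ w₂) ξ)) ξ) := by
  obtain ⟨H, _, _, _, ξ, E, F, hnorm, hEpos, hFpos, hEsum, hFsum, hcomm, hval⟩ := h
  obtain ⟨w, b, -⟩ := exists_hilbertBasis ℂ H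
  refine ⟨w, b.repr ξ, fun v₂ v₁ => conjCLM b.repr (E v₂ v₁),
    fun w₁ w₂ => conjCLM b.repr (F w₁ w₂), ?_, ?_, ?_, ?_, ?_, ?_, ?_⟩
  · rw [b.repr.norm_map]; exact hnorm
  · intro v₂ v₁ η; rw [conjCLM_inner]; exact hEpos _ _ _
  · intro w₁ w₂ η; rw [conjCLM_inner]; exact hFpos _ _ _
  · intro v₂; rw [← conjCLM_sum, hEsum, conjCLM_one]
  · intro w₁; rw [← conjCLM_sum, hFsum, conjCLM_one]
  · intro v₂ v₁ w₁ w₂; exact conjCLM_commute _ (hcomm v₂ v₁ w₁ w₂)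
  · intro v₂ w₁ v₁ w₂
    rw [hval]
    rw [show conjCLM b.repr (E v₂ v₁) (conjCLM b.repr (F w₁ w₂) (b.repr ξ))
        = (conjCLM b.repr (E v₂ v₁) * conjCLM b.repr (F w₁ w₂)) (b.repr ξ) from rfl,
      ← conjCLM_mul, conjCLM_apply, b.repr.symm_apply_apply]
    conv_rhs => rw [show b.repr ξ = b.repr ξ from rfl]
    rw [show ((E v₂ v₁ * F w₁ w₂ : H →L[ℂ] H) ξ) = E v₂ v₁ (F w₁ w₂ ξ) from rfl]
    rw [← b.repr.inner_map_map (E v₂ v₁ (F w₁ w₂ ξ)) ξ]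

/-- The composition of two quantum commuting NS correlations is a quantum commuting
NS correlation. -/
theorem nsComp_isQCCorr {V₁ V₂ V₃ W₁ W₂ W₃ : Type*}
    [Fintype V₁] [Fintype V₂] [Fintype V₃] [Fintype W₁] [Fintype W₂] [Fintype W₃]
    (Γ₁ : V₂ → W₁ → V₁ → W₂ → ℝ) (Γ₂ : V₃ → W₂ → V₂ → W₃ → ℝ)
    (h₁ : IsNSCorr Γ₁) (hq₁ : IsQCCorr Γ₁)
    (h₂ : IsNSCorr Γ₂) (hq₂ : IsQCCorr Γ₂) :
    IsNSCorr (nsComp Γ₂ Γ₁) ∧ IsQCCorr (nsComp Γ₂ Γ₁) := by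
  classical
  open QCAux in
  obtain ⟨ι, ξ₁, E₁, F₁, hn₁, hEpos₁, hFpos₁, hEsum₁, hFsum₁, hcomm₁, hval₁⟩ :=
    hq₁.exists_l2
  obtain ⟨κ, ξ₂, E₂, F₂, hn₂, hEpos₂, hFpos₂, hEsum₂, hFsum₂, hcomm₂, hval₂⟩ :=
    hq₂.exists_l2
  set K : Type := ↥(lp (fun _ : κ => L2 ι) 2) with hK
  set ζ : K := tns ξ₁ ξ₂ with hζ
  set E : V₃ → V₁ → K →L[ℂ] K :=
    fun v₃ v₁ => ∑ v₂, cwL (E₁ v₂ v₁) * rwL (ι := ι) (E₂ v₃ v₂) with hE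
  set F : W₁ → W₃ → K →L[ℂ] K :=
    fun w₁ w₃ => ∑ w₂, cwL (F₁ w₁ w₂) * rwL (ι := ι) (F₂ w₂ w₃) with hF
  have hnζ : ‖ζ‖ = 1 := by rw [hζ, norm_tns, hn₁, hn₂, mul_one]
  have hEsum : ∀ v₃, ∑ v₁, E v₃ v₁ = 1 := by
    intro v₃
    calc ∑ v₁, E v₃ v₁
        = ∑ v₂, ∑ v₁, cwL (E₁ v₂ v₁) * rwL (ι := ι) (E₂ v₃ v₂) := Finset.sum_comm
      _ = ∑ v₂, (∑ v₁, cwL (α := κ) (E₁ v₂ v₁)) * rwL (ι := ι) (E₂ v₃ v₂) := by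
          simp [Finset.sum_mul]
      _ = ∑ v₂, rwL (ι := ι) (E₂ v₃ v₂) := by
          refine Finset.sum_congr rfl fun v₂ _ => ?_
          rw [← cwL_sum, hEsum₁, cwL_one, one_mul]
      _ = rwL (ι := ι) (∑ v₂, E₂ v₃ v₂) := (rwL_sum _ _).symm
      _ = 1 := by rw [hEsum₂, rwL_one]
  have hFsum : ∀ w₁, ∑ w₃, F w₁ w₃ = 1 := by
    intro w₁
    calc ∑ w₃, F w₁ w₃
        = ∑ w₂, ∑ w₃, cwL (F₁ w₁ w₂) * rwL (ι := ι) (F₂ w₂ w₃) := Finset.sum_comm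
      _ = ∑ w₂, cwL (α := κ) (F₁ w₁ w₂) * (∑ w₃, rwL (ι := ι) (F₂ w₂ w₃)) := by
          simp [Finset.mul_sum]
      _ = ∑ w₂, cwL (α := κ) (F₁ w₁ w₂) := by
          refine Finset.sum_congr rfl fun w₂ _ => ?_
          rw [← rwL_sum, hFsum₂, rwL_one, mul_one]
      _ = cwL (∑ w₂, F₁ w₁ w₂) := (cwL_sum _ _).symm
      _ = 1 := by rw [hFsum₁, cwL_one]
  have hEpos : ∀ v₃ v₁ (η : K), 0 ≤ (inner ℂ ((E v₃ v₁) η) η : ℂ) := by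
    intro v₃ v₁ η
    rw [hE]
    simp only [ContinuousLinearMap.sum_apply]
    rw [sum_inner]
    refine Finset.sum_nonneg fun v₂ _ => ?_
    exact pos_cwL_rwL (E₁ v₂ v₁) (E₂ v₃ v₂) (hEpos₁ v₂ v₁) (hEpos₂ v₃ v₂) η
  have hFpos : ∀ w₁ w₃ (η : K), 0 ≤ (inner ℂ ((F w₁ w₃) η) η : ℂ) := by
    intro w₁ w₃ η
    rw [hF]
    simp only [ContinuousLinearMap.sum_apply]
    rw [sum_inner]
    refine Finset.sum_nonneg fun w₂ _ => ?_
    exact pos_cwL_rwL (F₁ w₁ w₂) (F₂ w₂ w₃) (hFpos₁ w₁ w₂) (hFpos₂ w₂ w₃) η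
  have hcomm : ∀ v₃ v₁ w₁ w₃, Commute (E v₃ v₁) (F w₁ w₃) := by
    intro v₃ v₁ w₁ w₃
    rw [hE, hF]
    refine Commute.sum_left _ _ _ fun v₂ _ => Commute.sum_right _ _ _ fun w₂ _ => ?_
    have hac := cwL_commute (α := κ) (hcomm₁ v₂ v₁ w₁ w₂)
    have had := cwL_rwL_commute (E₁ v₂ v₁) (F₂ w₂ w₃)
    have hbc := (cwL_rwL_commute (F₁ w₁ w₂) (E₂ v₃ v₂)).symm
    have hbd := rwL_commute (ι := ι) (hcomm₂ v₃ v₂ w₂ w₃)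
    exact (hac.mul_right had).mul_left (hbc.mul_right hbd)
  have hval : ∀ v₃ w₁ v₁ w₃,
      ((nsComp Γ₂ Γ₁ v₃ w₁ v₁ w₃ : ℝ) : ℂ) = inner ℂ ((E v₃ v₁) ((F w₁ w₃) ζ)) ζ := by
    intro v₃ w₁ v₁ w₃
    have hFζ : (F w₁ w₃) ζ = ∑ w₂, tns (F₁ w₁ w₂ ξ₁) (F₂ w₂ w₃ ξ₂) := by
      rw [hF]
      rw [ContinuousLinearMap.sum_apply]
      refine Finset.sum_congr rfl fun w₂ _ => ?_
      rw [ContinuousLinearMap.mul_apply, hζ, rwL_tns, cwL_tns]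
    have hEFζ : (E v₃ v₁) ((F w₁ w₃) ζ)
        = ∑ v₂, ∑ w₂, tns (E₁ v₂ v₁ (F₁ w₁ w₂ ξ₁)) (E₂ v₃ v₂ (F₂ w₂ w₃ ξ₂)) := by
      rw [hFζ, hE, ContinuousLinearMap.sum_apply]
      refine Finset.sum_congr rfl fun v₂ _ => ?_
      rw [map_sum]
      refine Finset.sum_congr rfl fun w₂ _ => ?_
      rw [ContinuousLinearMap.mul_apply, rwL_tns, cwL_tns]
    rw [hEFζ, sum_inner]
    unfold nsComp
    push_cast
    refine Finset.sum_congr rfl fun v₂ _ => ?_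
    rw [sum_inner]
    refine Finset.sum_congr rfl fun w₂ _ => ?_
    rw [hζ, inner_tns, ← hval₁, ← hval₂]
    ring
  constructor
  · refine ⟨?_, ?_, ?_, ?_⟩
    · intro v₃ w₁ v₁ w₃
      refine Finset.sum_nonneg fun v₂ _ => Finset.sum_nonneg fun w₂ _ => ?_
      exact mul_nonneg (h₁.1 _ _ _ _) (h₂.1 _ _ _ _)
    · intro v₃ w₁
      have key : ((∑ v₁, ∑ w₃, nsComp Γ₂ Γ₁ v₃ w₁ v₁ w₃ : ℝ) : ℂ) = ((1:ℝ) : ℂ) := by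
        push_cast
        calc (∑ v₁, ∑ w₃, ((nsComp Γ₂ Γ₁ v₃ w₁ v₁ w₃ : ℝ) : ℂ))
            = ∑ v₁, ∑ w₃, (inner ℂ ((E v₃ v₁) ((F w₁ w₃) ζ)) ζ : ℂ) := by
              refine Finset.sum_congr rfl fun v₁ _ => Finset.sum_congr rfl fun w₃ _ => hval ..
          _ = ∑ v₁, (inner ℂ ((E v₃ v₁) ((∑ w₃, F w₁ w₃) ζ)) ζ : ℂ) := by
              refine Finset.sum_congr rfl fun v₁ _ => ?_
              rw [← sum_inner, ← map_sum, ← ContinuousLinearMap.sum_apply]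
          _ = ∑ v₁, (inner ℂ ((E v₃ v₁) ζ) ζ : ℂ) := by rw [hFsum w₁]; simp
          _ = (inner ℂ ((∑ v₁, E v₃ v₁) ζ) ζ : ℂ) := by
              rw [← sum_inner, ← ContinuousLinearMap.sum_apply]
          _ = inner ℂ ζ ζ := by rw [hEsum v₃]; simp
          _ = ((1:ℝ) : ℂ) := by
              rw [inner_self_eq_norm_sq_to_K, hnζ]; norm_num
      exact_mod_cast key
    · intro v₃ w₁ w₁' v₁
      have key : ∀ w₁, ((∑ w₃, nsComp Γ₂ Γ₁ v₃ w₁ v₁ w₃ : ℝ) : ℂ)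
          = inner ℂ ((E v₃ v₁) ζ) ζ := by
        intro w
        push_cast
        calc (∑ w₃, ((nsComp Γ₂ Γ₁ v₃ w v₁ w₃ : ℝ) : ℂ))
            = ∑ w₃, (inner ℂ ((E v₃ v₁) ((F w w₃) ζ)) ζ : ℂ) := by
              refine Finset.sum_congr rfl fun w₃ _ => hval ..
          _ = (inner ℂ ((E v₃ v₁) ((∑ w₃, F w w₃) ζ)) ζ : ℂ) := by
              rw [← sum_inner, ← map_sum, ← ContinuousLinearMap.sum_apply]
          _ = inner ℂ ((E v₃ v₁) ζ) ζ := by rw [hFsum w]; simp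
      have := (key w₁).trans (key w₁').symm
      exact_mod_cast this
    · intro v₃ v₃' w₁ w₃
      have key : ∀ v₃, ((∑ v₁, nsComp Γ₂ Γ₁ v₃ w₁ v₁ w₃ : ℝ) : ℂ)
          = inner ℂ ((F w₁ w₃) ζ) ζ := by
        intro v
        push_cast
        calc (∑ v₁, ((nsComp Γ₂ Γ₁ v w₁ v₁ w₃ : ℝ) : ℂ))
            = ∑ v₁, (inner ℂ ((E v v₁) ((F w₁ w₃) ζ)) ζ : ℂ) := by
              refine Finset.sum_congr rfl fun v₁ _ => hval ..
          _ = (inner ℂ ((∑ v₁, E v v₁) ((F w₁ w₃) ζ)) ζ : ℂ) := by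
              rw [← sum_inner, ← ContinuousLinearMap.sum_apply]
          _ = inner ℂ ((F w₁ w₃) ζ) ζ := by rw [hEsum v]; simp
      have := (key v₃).trans (key v₃').symm
      exact_mod_cast this
  · exact ⟨K, inferInstance, inferInstance, inferInstance, ζ, E, F,
      hnζ, hEpos, hFpos, hEsum, hFsum, hcomm, hval⟩
end QCAux
end

section
/- Let E₁ ⊆ V₁×W₁ and E₂ ⊆ V₂×W₂ be full hypergraphs and Γ an NS correlation over (V₂,W₁,V₁,W₂). Then Γ fits the game E₁⇝E₂ if and only if for every channel 𝓔 from V₁ to W₁ that fits E₁, the simulated channel Γ[𝓔] fits E₂. -/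
/-- A channel `𝓔` fits a hypergraph `E` if `𝓔(w|v) > 0` implies `(v,w) ∈ E`. -/
def ChannelFits {V W : Type*} (E : V → W → ℝ) (G : Set (V × W)) : Prop :=
  ∀ v w, 0 < E v w → (v, w) ∈ G

/-- A hypergraph is full if every vertex lies on some edge. -/
def IsFull {V W : Type*} (G : Set (V × W)) : Prop :=
  ∀ v, ∃ w, (v, w) ∈ G

/-- `Γ` fits the quasi-homomorphism game `E₁ ⇝ E₂`. -/
def FitsQuasiHom {V₁ W₁ V₂ W₂ : Type*} (Γ : V₂ → W₁ → V₁ → W₂ → ℝ)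
    (E₁ : Set (V₁ × W₁)) (E₂ : Set (V₂ × W₂)) : Prop :=
  ∀ v₂ w₁ v₁ w₂, 0 < Γ v₂ w₁ v₁ w₂ → (v₁, w₁) ∈ E₁ → (v₂, w₂) ∈ E₂

/-- For full hypergraphs `E₁, E₂` and an NS correlation `Γ`, `Γ` fits `E₁ ⇝ E₂` iff
the simulation map `𝓔 ↦ Γ[𝓔]` sends channels fitting `E₁` to channels fitting `E₂`. -/
theorem fitsQuasiHom_iff_simulate_fits {V₁ W₁ V₂ W₂ : Type*}
    [Fintype V₁] [Fintype W₁] [Fintype V₂] [Fintype W₂]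
    (E₁ : Set (V₁ × W₁)) (E₂ : Set (V₂ × W₂))
    (hfull₁ : IsFull E₁) (hfull₂ : IsFull E₂)
    (Γ : V₂ → W₁ → V₁ → W₂ → ℝ) (hΓ : IsNSCorr Γ) :
    FitsQuasiHom Γ E₁ E₂ ↔
      ∀ E : V₁ → W₁ → ℝ, IsChannel E → ChannelFits E E₁ →
        ChannelFits (simulate Γ E) E₂ := by
  classical
  obtain ⟨hpos, hsum, hns1, hns2⟩ := hΓ
  constructor
  · intro h E hE hfit v₂ w₂ hp
    have h0 : ∑ v₁ : V₁, (0:ℝ) < ∑ v₁, ∑ w₁, Γ v₂ w₁ v₁ w₂ * E v₁ w₁ := by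
      simpa [simulate] using hp
    obtain ⟨v₁, -, hv₁⟩ := Finset.exists_lt_of_sum_lt h0
    have h1 : ∑ w₁ : W₁, (0:ℝ) < ∑ w₁, Γ v₂ w₁ v₁ w₂ * E v₁ w₁ := by simpa using hv₁
    obtain ⟨w₁, -, hw₁⟩ := Finset.exists_lt_of_sum_lt h1
    rcases mul_pos_iff.mp hw₁ with ⟨hg, he⟩ | ⟨hg, _⟩
    · exact h v₂ w₁ v₁ w₂ hg (hfit v₁ w₁ he)
    · exact absurd (hpos v₂ w₁ v₁ w₂) (not_le.mpr hg)
  · intro h v₂ w₁ v₁ w₂ hg hmem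
    set g : V₁ → W₁ := fun v => if v = v₁ then w₁ else (hfull₁ v).choose with hgdef
    set E : V₁ → W₁ → ℝ := fun v w => if w = g v then 1 else 0 with hEdef
    have hch : IsChannel E := by
      constructor
      · intro v w
        by_cases hw : w = g v <;> simp [hEdef, hw]
      · intro v; simp [hEdef]
    have hfits : ChannelFits E E₁ := by
      intro v w hw
      have hwg : w = g v := by
        by_contra hne; simp [hEdef, hne] at hw
      subst hwg
      by_cases hv : v = v₁
      · subst hv; simpa [hgdef] using hmem
      · simpa [hgdef, hv] using (hfull₁ v).choose_spec
    apply h E hch hfits v₂ w₂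
    have hterm : ∀ v ∈ Finset.univ, (0:ℝ) ≤ ∑ w, Γ v₂ w v w₂ * E v w :=
      fun v _ => Finset.sum_nonneg fun w _ => mul_nonneg (hpos _ _ _ _) (hch.1 v w)
    refine Finset.sum_pos' hterm ⟨v₁, Finset.mem_univ _, ?_⟩
    refine Finset.sum_pos' (fun w _ => mul_nonneg (hpos _ _ _ _) (hch.1 v₁ w))
      ⟨w₁, Finset.mem_univ _, ?_⟩
    have : E v₁ w₁ = 1 := by simp [hEdef, hgdef]
    simpa [this] using hg
end

section
/- Let E₁ ⊆ V₁×W₁ and E₂ ⊆ V₂×W₂ be hypergraphs. There exists a local NS correlation over (V₂,W₁,V₁,W₂) fitting the game E₁⇝E₂ if and only if there exist functions f : V₂ → V₁ and g : W₁ → W₂ such that for all v₂∈V₂ and w₁∈W₁, (f(v₂),w₁)∈E₁ implies (v₂,g(w₁))∈E₂. -/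
/-- A local correlation: a finite convex combination of products of channels. -/
def IsLocalCorr {V₂ W₁ V₁ W₂ : Type*} [Fintype V₁] [Fintype W₂]
    (Γ : V₂ → W₁ → V₁ → W₂ → ℝ) : Prop :=
  ∃ (n : ℕ) (lam : Fin n → ℝ) (Φ : Fin n → V₂ → V₁ → ℝ) (Ψ : Fin n → W₁ → W₂ → ℝ),
    (∀ i, 0 ≤ lam i) ∧ (∑ i, lam i = 1) ∧
    (∀ i, IsChannel (Φ i)) ∧ (∀ i, IsChannel (Ψ i)) ∧
    ∀ v₂ w₁ v₁ w₂, Γ v₂ w₁ v₁ w₂ = ∑ i, lam i * (Φ i v₂ v₁ * Ψ i w₁ w₂)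

private lemma exists_pos_of_sum_one {α : Type*} [Fintype α] {h : α → ℝ}
    (h0 : ∀ x, 0 ≤ h x) (h1 : ∑ x, h x = 1) : ∃ x, 0 < h x := by
  by_contra hc
  push_neg at hc
  have : ∑ x, h x = 0 :=
    Finset.sum_eq_zero fun x _ => le_antisymm (hc x) (h0 x)
  simp [this] at h1

/-- A local NS correlation fits `E₁ ⇝ E₂` iff there is a (classical) quasi-homomorphism,
i.e. functions `f, g` with `(f v₂, w₁) ∈ E₁ ⟹ (v₂, g w₁) ∈ E₂`. -/
theorem localQuasiHom_iff {V₁ W₁ V₂ W₂ : Type*}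
    [Fintype V₁] [Fintype W₁] [Fintype V₂] [Fintype W₂]
    (E₁ : Set (V₁ × W₁)) (E₂ : Set (V₂ × W₂)) :
    (∃ Γ : V₂ → W₁ → V₁ → W₂ → ℝ,
        IsNSCorr Γ ∧ IsLocalCorr Γ ∧ FitsQuasiHom Γ E₁ E₂) ↔
      (∃ (f : V₂ → V₁) (g : W₁ → W₂),
        ∀ v₂ w₁, (f v₂, w₁) ∈ E₁ → (v₂, g w₁) ∈ E₂) := by
  classical
  constructor
  · rintro ⟨Γ, _, ⟨n, lam, Φ, Ψ, hlam0, hlam1, hΦ, hΨ, hΓ⟩, hFit⟩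
    obtain ⟨i, hi⟩ : ∃ i, 0 < lam i := exists_pos_of_sum_one hlam0 hlam1
    choose f hf using fun v₂ => exists_pos_of_sum_one ((hΦ i).1 v₂) ((hΦ i).2 v₂)
    choose g hg using fun w₁ => exists_pos_of_sum_one ((hΨ i).1 w₁) ((hΨ i).2 w₁)
    refine ⟨f, g, fun v₂ w₁ hE => hFit v₂ w₁ (f v₂) (g w₁) ?_ hE⟩
    rw [hΓ]
    have hterm : 0 < lam i * (Φ i v₂ (f v₂) * Ψ i w₁ (g w₁)) :=
      mul_pos hi (mul_pos (hf v₂) (hg w₁))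
    calc (0 : ℝ) < lam i * (Φ i v₂ (f v₂) * Ψ i w₁ (g w₁)) := hterm
      _ ≤ ∑ j, lam j * (Φ j v₂ (f v₂) * Ψ j w₁ (g w₁)) := by
          refine Finset.single_le_sum (f := fun j => lam j * (Φ j v₂ (f v₂) * Ψ j w₁ (g w₁))) (fun j _ => ?_) (Finset.mem_univ i)
          exact mul_nonneg (hlam0 j)
            (mul_nonneg ((hΦ j).1 v₂ (f v₂)) ((hΨ j).1 w₁ (g w₁)))
  · rintro ⟨f, g, hfg⟩
    set Φ : V₂ → V₁ → ℝ := fun v₂ v₁ => if v₁ = f v₂ then 1 else 0 with hΦdef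
    set Ψ : W₁ → W₂ → ℝ := fun w₁ w₂ => if w₂ = g w₁ then 1 else 0 with hΨdef
    have hΦchan : IsChannel Φ :=
      ⟨fun v v₁ => by dsimp [Φ]; split <;> norm_num, fun v => by simp [Φ]⟩
    have hΨchan : IsChannel Ψ :=
      ⟨fun w w₂ => by dsimp [Ψ]; split <;> norm_num, fun w => by simp [Ψ]⟩
    refine ⟨fun v₂ w₁ v₁ w₂ => Φ v₂ v₁ * Ψ w₁ w₂, ⟨?_, ?_, ?_, ?_⟩, ?_, ?_⟩
    · exact fun v₂ w₁ v₁ w₂ => mul_nonneg (hΦchan.1 v₂ v₁) (hΨchan.1 w₁ w₂)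
    · intro v₂ w₁
      simp [← Finset.sum_mul, hΦchan.2 v₂, hΨchan.2 w₁, ← Finset.mul_sum]
    · intro v₂ w₁ w₁' v₁
      rw [← Finset.mul_sum, ← Finset.mul_sum, hΨchan.2 w₁, hΨchan.2 w₁']
    · intro v₂ v₂' w₁ w₂
      rw [← Finset.sum_mul, ← Finset.sum_mul, hΦchan.2 v₂, hΦchan.2 v₂']
    · exact ⟨1, fun _ => 1, fun _ => Φ, fun _ => Ψ, fun _ => zero_le_one, by simp,
        fun _ => hΦchan, fun _ => hΨchan, fun v₂ w₁ v₁ w₂ => by simp⟩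
    · intro v₂ w₁ v₁ w₂ hpos hE
      have h1 : Φ v₂ v₁ ≠ 0 := fun h => by simp [h] at hpos
      have h2 : Ψ w₁ w₂ ≠ 0 := fun h => by simp [h] at hpos
      have hv : v₁ = f v₂ := by by_contra h; exact h1 (by simp [Φ, h])
      have hw : w₂ = g w₁ := by by_contra h; exact h2 (by simp [Ψ, h])
      subst hv hw
      exact hfg v₂ w₁ hE
end

section
/- Let E₁ ⊆ V₁×W₁ and E₂ ⊆ V₂×W₂ be hypergraphs. There exists a local NS correlation over (V₂,W₁,V₁,W₂) fitting the game E₁↔E₂ if and only if there exist functions f : V₂ → V₁ and g : W₁ → W₂ such that for all v₂∈V₂ and w₁∈W₁, (f(v₂),w₁)∈E₁ if and only if (v₂,g(w₁))∈E₂; equivalently, f⁻¹(E₁(w₁)) = E₂(g(w₁)) for every w₁∈W₁, where E(w) = {v : (v,w)∈E}. -/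
/-- `Γ` fits the homomorphism game `E₁ ↔ E₂`. -/
def FitsHom {V₁ W₁ V₂ W₂ : Type*} (Γ : V₂ → W₁ → V₁ → W₂ → ℝ)
    (E₁ : Set (V₁ × W₁)) (E₂ : Set (V₂ × W₂)) : Prop :=
  ∀ v₂ w₁ v₁ w₂, 0 < Γ v₂ w₁ v₁ w₂ → ((v₁, w₁) ∈ E₁ ↔ (v₂, w₂) ∈ E₂)

/-- A local NS correlation fits the game `E₁ ↔ E₂` iff there is a classical hypergraph
homomorphism: functions `f, g` with `(f v₂, w₁) ∈ E₁ ⟺ (v₂, g w₁) ∈ E₂`. -/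
theorem localHom_iff {V₁ W₁ V₂ W₂ : Type*}
    [Fintype V₁] [Fintype W₁] [Fintype V₂] [Fintype W₂]
    (E₁ : Set (V₁ × W₁)) (E₂ : Set (V₂ × W₂)) :
    (∃ Γ : V₂ → W₁ → V₁ → W₂ → ℝ,
        IsNSCorr Γ ∧ IsLocalCorr Γ ∧ FitsHom Γ E₁ E₂) ↔
      (∃ (f : V₂ → V₁) (g : W₁ → W₂),
        ∀ v₂ w₁, (f v₂, w₁) ∈ E₁ ↔ (v₂, g w₁) ∈ E₂) := by
  classical
  constructor
  · rintro ⟨Γ, -, ⟨n, lam, Φ, Ψ, hlam0, hlam1, hΦ, hΨ, hΓ⟩, hfit⟩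
    obtain ⟨i, hi⟩ : ∃ i, 0 < lam i := by
      by_contra h
      push_neg at h
      have : ∑ i, lam i ≤ 0 := Finset.sum_nonpos (fun i _ => h i)
      linarith
    have hf : ∀ v₂, ∃ v₁, 0 < Φ i v₂ v₁ := by
      intro v₂
      by_contra h
      push_neg at h
      have : ∑ v₁, Φ i v₂ v₁ ≤ 0 := Finset.sum_nonpos (fun v₁ _ => h v₁)
      have := (hΦ i).2 v₂
      linarith
    have hg : ∀ w₁, ∃ w₂, 0 < Ψ i w₁ w₂ := by
      intro w₁
      by_contra h
      push_neg at h
      have : ∑ w₂, Ψ i w₁ w₂ ≤ 0 := Finset.sum_nonpos (fun w₂ _ => h w₂)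
      have := (hΨ i).2 w₁
      linarith
    choose f hfp using hf
    choose g hgp using hg
    refine ⟨f, g, fun v₂ w₁ => ?_⟩
    apply hfit
    rw [hΓ]
    have hterm : ∀ j, j ∈ Finset.univ → 0 ≤ lam j * (Φ j v₂ (f v₂) * Ψ j w₁ (g w₁)) :=
      fun j _ => mul_nonneg (hlam0 j) (mul_nonneg ((hΦ j).1 _ _) ((hΨ j).1 _ _))
    have : lam i * (Φ i v₂ (f v₂) * Ψ i w₁ (g w₁)) ≤
        ∑ j, lam j * (Φ j v₂ (f v₂) * Ψ j w₁ (g w₁)) :=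
      Finset.single_le_sum hterm (Finset.mem_univ i)
    have hpos : 0 < lam i * (Φ i v₂ (f v₂) * Ψ i w₁ (g w₁)) :=
      mul_pos hi (mul_pos (hfp v₂) (hgp w₁))
    linarith
  · rintro ⟨f, g, hfg⟩
    refine ⟨fun v₂ w₁ v₁ w₂ =>
      (if v₁ = f v₂ then (1 : ℝ) else 0) * (if w₂ = g w₁ then (1 : ℝ) else 0),
      ⟨?_, ?_, ?_, ?_⟩, ?_, ?_⟩
    · intro v₂ w₁ v₁ w₂
      positivity
    · intro v₂ w₁
      simp [← Finset.sum_mul, Finset.sum_ite_eq']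
    · intro v₂ w₁ w₁' v₁
      simp [← Finset.mul_sum, Finset.sum_ite_eq']
    · intro v₂ v₂' w₁ w₂
      simp [← Finset.sum_mul, Finset.sum_ite_eq']
    · refine ⟨1, fun _ => 1, fun _ v₂ v₁ => if v₁ = f v₂ then 1 else 0,
        fun _ w₁ w₂ => if w₂ = g w₁ then 1 else 0, fun _ => zero_le_one, by simp,
        fun _ => ⟨fun v w => by positivity, fun v => by simp [Finset.sum_ite_eq']⟩,
        fun _ => ⟨fun v w => by positivity, fun v => by simp [Finset.sum_ite_eq']⟩,
        fun v₂ w₁ v₁ w₂ => by simp⟩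
    · intro v₂ w₁ v₁ w₂ h
      have h1 : v₁ = f v₂ := by
        by_contra hc
        simp [hc] at h
      have h2 : w₂ = g w₁ := by
        by_contra hc
        simp [hc] at h
      subst h1; subst h2
      exact hfg v₂ w₁
end

section
/- Let V and W be finite sets and E₁, E₂ ⊆ V×W be hypergraphs. There exists a local bicorrelation over (V,W,V,W) fitting the game E₁↔E₂ if and only if the hypergraphs E₁ and E₂ are isomorphic, i.e. there exist bijections f : V → V and g : W → W such that f⁻¹(E₁(w)) = E₂(g(w)) for every w∈W, where E(w) = {v : (v,w)∈E}. -/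
/-- A bistochastic matrix `p v₂ v₁` (standing for `p(v₁|v₂)`): nonnegative entries,
all row sums and all column sums equal to `1`. -/
def IsBistochastic {V : Type*} [Fintype V] (p : V → V → ℝ) : Prop :=
  (∀ v₂ v₁, 0 ≤ p v₂ v₁) ∧ (∀ v₂, ∑ v₁, p v₂ v₁ = 1) ∧ (∀ v₁, ∑ v₂, p v₂ v₁ = 1)

/-- A local bicorrelation over `(V, W, V, W)`: a finite convex combination of products
of bistochastic matrices. -/
def IsLocalBicorr {V W : Type*} [Fintype V] [Fintype W]
    (Γ : V → W → V → W → ℝ) : Prop :=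
  ∃ (n : ℕ) (lam : Fin n → ℝ) (p : Fin n → V → V → ℝ) (q : Fin n → W → W → ℝ),
    (∀ i, 0 ≤ lam i) ∧ (∑ i, lam i = 1) ∧
    (∀ i, IsBistochastic (p i)) ∧ (∀ i, IsBistochastic (q i)) ∧
    ∀ v₂ w₁ v₁ w₂, Γ v₂ w₁ v₁ w₂ = ∑ i, lam i * (p i v₂ v₁ * q i w₁ w₂)

open Finset in
lemma bistochastic_exists_perm {V : Type*} [Fintype V] {p : V → V → ℝ}
    (hp : IsBistochastic p) : ∃ f : V → V, Function.Bijective f ∧ ∀ v, 0 < p v (f v) := by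
  classical
  obtain ⟨hnn, hrow, hcol⟩ := hp
  set t : V → Finset V := fun v₂ => univ.filter (fun v₁ => 0 < p v₂ v₁) with ht
  have hall : ∀ s : Finset V, s.card ≤ (s.biUnion t).card := by
    intro s
    have key : (s.card : ℝ) ≤ ((s.biUnion t).card : ℝ) := by
      calc (s.card : ℝ) = ∑ v₂ ∈ s, ∑ v₁, p v₂ v₁ := by simp [hrow]
        _ = ∑ v₂ ∈ s, ∑ v₁ ∈ s.biUnion t, p v₂ v₁ := by
            refine Finset.sum_congr rfl fun v₂ hv₂ => ?_
            refine (Finset.sum_subset (subset_univ _) ?_).symm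
            intro v₁ _ hnot
            by_contra h
            have hpos : 0 < p v₂ v₁ := lt_of_le_of_ne (hnn _ _) (Ne.symm h)
            exact hnot (Finset.mem_biUnion.2 ⟨v₂, hv₂, by simp [ht, hpos]⟩)
        _ = ∑ v₁ ∈ s.biUnion t, ∑ v₂ ∈ s, p v₂ v₁ := Finset.sum_comm
        _ ≤ ∑ v₁ ∈ s.biUnion t, ∑ v₂, p v₂ v₁ := by
            exact Finset.sum_le_sum fun v₁ _ =>
              Finset.sum_le_sum_of_subset_of_nonneg (subset_univ _) (fun a _ _ => hnn a v₁)
        _ = ((s.biUnion t).card : ℝ) := by simp [hcol]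
    exact_mod_cast key
  obtain ⟨f, hinj, hf⟩ := (Finset.all_card_le_biUnion_card_iff_exists_injective t).1 hall
  refine ⟨f, Finite.injective_iff_bijective.1 hinj, fun v => ?_⟩
  have := hf v
  simpa [ht] using this

/-- There is a local bicorrelation fitting the game `E₁ ↔ E₂` iff the hypergraphs
`E₁` and `E₂` are isomorphic. -/
theorem localIso_iff {V W : Type*} [Fintype V] [Fintype W]
    (E₁ E₂ : Set (V × W)) :
    (∃ Γ : V → W → V → W → ℝ, IsLocalBicorr Γ ∧ FitsHom Γ E₁ E₂) ↔
      (∃ (f : V → V) (g : W → W),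
        Function.Bijective f ∧ Function.Bijective g ∧
        ∀ v w, (f v, w) ∈ E₁ ↔ (v, g w) ∈ E₂) := by
  classical
  constructor
  · rintro ⟨Γ, ⟨n, lam, p, q, hlamnn, hlamsum, hp, hq, hΓ⟩, hfit⟩
    have hex : ∃ i, 0 < lam i := by
      by_contra h
      push_neg at h
      have h0 : ∑ i, lam i = 0 :=
        Finset.sum_eq_zero fun i _ => le_antisymm (h i) (hlamnn i)
      rw [h0] at hlamsum
      exact zero_ne_one hlamsum
    obtain ⟨i, hi⟩ := hex
    obtain ⟨f, hf, hfp⟩ := bistochastic_exists_perm (hp i)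
    obtain ⟨g, hg, hgq⟩ := bistochastic_exists_perm (hq i)
    refine ⟨f, g, hf, hg, fun v w => ?_⟩
    apply hfit v w (f v) (g w)
    rw [hΓ]
    have hpos : 0 < lam i * (p i v (f v) * q i w (g w)) :=
      mul_pos hi (mul_pos (hfp v) (hgq w))
    refine lt_of_lt_of_le hpos (Finset.single_le_sum (f := fun j => lam j * (p j v (f v) * q j w (g w))) (fun j _ => ?_) (Finset.mem_univ i))
    exact mul_nonneg (hlamnn j) (mul_nonneg ((hp j).1 _ _) ((hq j).1 _ _))
  · rintro ⟨f, g, hf, hg, hfg⟩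
    refine ⟨fun v₂ w₁ v₁ w₂ => (if v₁ = f v₂ then 1 else 0) * (if w₂ = g w₁ then 1 else 0),
      ⟨1, fun _ => 1, fun _ v₂ v₁ => if v₁ = f v₂ then 1 else 0,
        fun _ w₁ w₂ => if w₂ = g w₁ then 1 else 0, fun _ => zero_le_one, by simp, ?_, ?_, by simp⟩, ?_⟩
    · intro _
      refine ⟨fun _ _ => by positivity, fun v₂ => by simp, fun v₁ => ?_⟩
      rw [← Equiv.sum_comp (Equiv.ofBijective f hf).symm]
      simp [Equiv.ofBijective_apply_symm_apply, eq_comm]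
    · intro _
      refine ⟨fun _ _ => by positivity, fun w₁ => by simp [eq_comm], fun w₂ => ?_⟩
      rw [← Equiv.sum_comp (Equiv.ofBijective g hg).symm]
      simp [Equiv.ofBijective_apply_symm_apply, eq_comm]
    · intro v₂ w₁ v₁ w₂ h
      have h1 : v₁ = f v₂ := by by_contra hc; simp [hc] at h
      have h2 : w₂ = g w₁ := by by_contra hc; simp [hc] at h
      subst h1; subst h2
      exact hfg v₂ w₁
end

section
/- Let E_i ⊆ V_i×W_i be hypergraphs and 𝔈_i sets of channels from V_i to W_i, i = 1,2. Suppose Γ is an NS correlation over (V₂,W₁,V₁,W₂) fitting the game E₁↔E₂, and suppose Γ[𝓔] ∈ 𝔈₂ for every 𝓔 ∈ 𝔈₁. Let π₂ be a probability distribution on V₂ and define π₁(v₁) = Σ_{v₂∈V₂} Γ_{V₂→V₁}(v₁|v₂)π₂(v₂), where Γ_{V₂→V₁}(v₁|v₂) = Σ_{w₂∈W₂} Γ(v₁,w₂|v₂,w₁) (independent of w₁). Then ω_{𝔈₁}(E₁,π₁) ≤ ω_{𝔈₂}(E₂,π₂). -/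
/-- The value `ω_𝔈(E, π) = sup_{𝓔 ∈ 𝔈} Σ_{(v,w) ∈ E} π(v) 𝓔(w|v)`. -/
noncomputable def omegaVal {V W : Type*} [Fintype V] [Fintype W]
    (E : Set (V × W)) (π : V → ℝ) (𝔈 : Set (V → W → ℝ)) : ℝ :=
  sSup ((fun 𝓔 => ∑ v, ∑ w, Set.indicator E (fun q => π q.1 * 𝓔 q.1 q.2) (v, w)) '' 𝔈)

lemma sum_swap4 {α β γ δ : Type*} [Fintype α] [Fintype β] [Fintype γ] [Fintype δ]
    (f : α → β → γ → δ → ℝ) :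
    ∑ a, ∑ b, ∑ c, ∑ d, f a b c d = ∑ c, ∑ d, ∑ a, ∑ b, f a b c d := by
  calc ∑ a, ∑ b, ∑ c, ∑ d, f a b c d
      = ∑ a, ∑ c, ∑ b, ∑ d, f a b c d :=
        Finset.sum_congr rfl fun a _ => Finset.sum_comm
    _ = ∑ c, ∑ a, ∑ b, ∑ d, f a b c d := Finset.sum_comm
    _ = ∑ c, ∑ a, ∑ d, ∑ b, f a b c d :=
        Finset.sum_congr rfl fun c _ => Finset.sum_congr rfl fun a _ => Finset.sum_comm
    _ = ∑ c, ∑ d, ∑ a, ∑ b, f a b c d :=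
        Finset.sum_congr rfl fun c _ => Finset.sum_comm

/-- If `Γ` is an NS correlation fitting `E₁ ↔ E₂` which maps `𝔈₁` into `𝔈₂` under
simulation, then `ω_{𝔈₁}(E₁, π₁) ≤ ω_{𝔈₂}(E₂, π₂)`, where `π₁ = Γ_{V₂→V₁}(π₂)`. -/
theorem omegaVal_le_of_hom {V₁ W₁ V₂ W₂ : Type*}
    [Fintype V₁] [Fintype W₁] [Fintype V₂] [Fintype W₂]
    (E₁ : Set (V₁ × W₁)) (E₂ : Set (V₂ × W₂))
    (𝔈₁ : Set (V₁ → W₁ → ℝ)) (𝔈₂ : Set (V₂ → W₂ → ℝ))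
    (h𝔈₁ : ∀ E ∈ 𝔈₁, IsChannel E) (h𝔈₂ : ∀ E ∈ 𝔈₂, IsChannel E)
    (Γ : V₂ → W₁ → V₁ → W₂ → ℝ) (hΓ : IsNSCorr Γ) (hfit : FitsHom Γ E₁ E₂)
    (hsim : ∀ E ∈ 𝔈₁, simulate Γ E ∈ 𝔈₂)
    (π₂ : V₂ → ℝ) (hπ₂pos : ∀ v₂, 0 ≤ π₂ v₂) (hπ₂sum : ∑ v₂, π₂ v₂ = 1)
    (π₁ : V₁ → ℝ)
    (hπ₁ : ∀ w₁ v₁, π₁ v₁ = ∑ v₂, (∑ w₂, Γ v₂ w₁ v₁ w₂) * π₂ v₂) :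
    omegaVal E₁ π₁ 𝔈₁ ≤ omegaVal E₂ π₂ 𝔈₂ := by
  classical
  have hbdd : ∀ x ∈ ((fun 𝓔 => ∑ v, ∑ w,
      Set.indicator E₂ (fun q => π₂ q.1 * 𝓔 q.1 q.2) (v, w)) '' 𝔈₂), x ≤ 1 := by
    rintro x ⟨𝓕, h𝓕, rfl⟩
    have hch := h𝔈₂ 𝓕 h𝓕
    calc (∑ v, ∑ w, Set.indicator E₂ (fun q => π₂ q.1 * 𝓕 q.1 q.2) (v, w))
        ≤ ∑ v, ∑ w, π₂ v * 𝓕 v w := by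
          refine Finset.sum_le_sum fun v _ => Finset.sum_le_sum fun w _ => ?_
          rw [Set.indicator_apply]
          split_ifs with h
          · exact le_refl _
          · exact mul_nonneg (hπ₂pos v) (hch.1 v w)
      _ = 1 := by
          simp only [← Finset.mul_sum]
          simp [hch.2, hπ₂sum]
  have hub : BddAbove ((fun 𝓔 => ∑ v, ∑ w,
      Set.indicator E₂ (fun q => π₂ q.1 * 𝓔 q.1 q.2) (v, w)) '' 𝔈₂) := ⟨1, hbdd⟩
  rw [omegaVal, omegaVal]
  apply Real.sSup_le
  · rintro x ⟨𝓔, h𝓔, rfl⟩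
    have hch := h𝔈₁ 𝓔 h𝓔
    have hmem := hsim 𝓔 h𝓔
    have key : (∑ v, ∑ w, Set.indicator E₁ (fun q => π₁ q.1 * 𝓔 q.1 q.2) (v, w))
        ≤ ∑ v, ∑ w, Set.indicator E₂ (fun q => π₂ q.1 * (simulate Γ 𝓔) q.1 q.2) (v, w) := by
      have expand : (∑ v, ∑ w, Set.indicator E₁ (fun q => π₁ q.1 * 𝓔 q.1 q.2) (v, w))
          = ∑ v₂, ∑ w₂, ∑ v₁, ∑ w₁,
              (if (v₁, w₁) ∈ E₁ then π₂ v₂ * (Γ v₂ w₁ v₁ w₂ * 𝓔 v₁ w₁) else 0) := by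
        rw [← sum_swap4
          (fun v₁ w₁ v₂ w₂ => if (v₁, w₁) ∈ E₁ then π₂ v₂ * (Γ v₂ w₁ v₁ w₂ * 𝓔 v₁ w₁) else 0)]
        refine Finset.sum_congr rfl fun v₁ _ => Finset.sum_congr rfl fun w₁ _ => ?_
        rw [Set.indicator_apply]
        split_ifs with h
        · rw [hπ₁ w₁ v₁, Finset.sum_mul]
          refine Finset.sum_congr rfl fun v₂ _ => ?_
          rw [Finset.sum_mul, Finset.sum_mul]
          exact Finset.sum_congr rfl fun w₂ _ => by ring
        · simp
      rw [expand]
      refine Finset.sum_le_sum fun v₂ _ => Finset.sum_le_sum fun w₂ _ => ?_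
      rw [Set.indicator_apply]
      by_cases h₂ : (v₂, w₂) ∈ E₂
      · rw [if_pos h₂]
        show _ ≤ π₂ v₂ * simulate Γ 𝓔 v₂ w₂
        rw [simulate, Finset.mul_sum]
        refine Finset.sum_le_sum fun v₁ _ => ?_
        rw [Finset.mul_sum]
        refine Finset.sum_le_sum fun w₁ _ => ?_
        split_ifs with h₁
        · exact le_of_eq (by ring)
        · exact mul_nonneg (hπ₂pos v₂) (mul_nonneg (hΓ.1 _ _ _ _) (hch.1 _ _))
      · rw [if_neg h₂]
        apply le_of_eq
        refine Finset.sum_eq_zero fun v₁ _ => Finset.sum_eq_zero fun w₁ _ => ?_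
        split_ifs with h₁
        · have hΓ0 : Γ v₂ w₁ v₁ w₂ = 0 := by
            by_contra hne
            exact h₂ ((hfit v₂ w₁ v₁ w₂
              (lt_of_le_of_ne (hΓ.1 _ _ _ _) (Ne.symm hne))).mp h₁)
          simp [hΓ0]
        · rfl
    exact key.trans (le_csSup hub ⟨_, hmem, rfl⟩)
  · rcases Set.eq_empty_or_nonempty 𝔈₂ with h | ⟨𝓕, h𝓕⟩
    · simp [h, Real.sSup_empty]
    · have h0 : 0 ≤ ∑ v, ∑ w, Set.indicator E₂ (fun q => π₂ q.1 * 𝓕 q.1 q.2) (v, w) :=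
        Finset.sum_nonneg fun v _ => Finset.sum_nonneg fun w _ =>
          Set.indicator_nonneg (fun q _ => mul_nonneg (hπ₂pos q.1) ((h𝔈₂ 𝓕 h𝓕).1 q.1 q.2)) _
      exact h0.trans (le_csSup hub ⟨𝓕, h𝓕, rfl⟩)
end

section
/- Let V and W be finite sets, E₁, E₂ ⊆ V×W be hypergraphs and 𝔈₁, 𝔈₂ sets of channels from V to W. Suppose Γ is an NS bicorrelation over (V,W,V,W) fitting the game E₁↔E₂, such that Γ[𝓔] ∈ 𝔈₂ for every 𝓔 ∈ 𝔈₁ and Γ*[𝓕] ∈ 𝔈₁ for every 𝓕 ∈ 𝔈₂. Let π be a Γ-stationary probability distribution on V. Then ω_{𝔈₁}(E₁,π) = ω_{𝔈₂}(E₂,π). -/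
/-- The dual correlation `Γ*`, with `Γ*(v₂,w₁|v₁,w₂) = Γ(v₁,w₂|v₂,w₁)`. -/
def nsDual {V₂ W₁ V₁ W₂ : Type*} (Γ : V₂ → W₁ → V₁ → W₂ → ℝ) :
    V₁ → W₂ → V₂ → W₁ → ℝ :=
  fun v₁ w₂ v₂ w₁ => Γ v₂ w₁ v₁ w₂

/-- An NS bicorrelation over `(V, W, V, W)`: a unital NS correlation whose dual is
again an NS correlation. -/
def IsNSBicorr {V W : Type*} [Fintype V] [Fintype W]
    (Γ : V → W → V → W → ℝ) : Prop :=
  IsNSCorr Γ ∧ (∀ v₁ w₂, ∑ v₂, ∑ w₁, Γ v₂ w₁ v₁ w₂ = 1) ∧ IsNSCorr (nsDual Γ)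

private lemma reorder4 {V W : Type*} [Fintype V] [Fintype W] (f : V → W → V → W → ℝ) :
    (∑ v₂, ∑ w₂, ∑ v₁, ∑ w₁, f v₂ w₂ v₁ w₁) = ∑ v₁, ∑ w₁, ∑ v₂, ∑ w₂, f v₂ w₂ v₁ w₁ := by
  have h1 : (∑ v₂, ∑ w₂, ∑ v₁, ∑ w₁, f v₂ w₂ v₁ w₁)
      = ∑ p : V × W, ∑ q : V × W, f p.1 p.2 q.1 q.2 := by
    simp [Fintype.sum_prod_type]
  have h2 : (∑ v₁, ∑ w₁, ∑ v₂, ∑ w₂, f v₂ w₂ v₁ w₁)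
      = ∑ q : V × W, ∑ p : V × W, f p.1 p.2 q.1 q.2 := by
    simp [Fintype.sum_prod_type]
  rw [h1, h2, Finset.sum_comm]

/-- If `Γ` is an NS bicorrelation fitting `E₁ ↔ E₂` with `Γ[𝔈₁] ⊆ 𝔈₂` and
`Γ*[𝔈₂] ⊆ 𝔈₁`, and `π` is `Γ`-stationary, then `ω_{𝔈₁}(E₁, π) = ω_{𝔈₂}(E₂, π)`. -/
theorem omegaVal_eq_of_iso {V W : Type*} [Fintype V] [Fintype W]
    (E₁ E₂ : Set (V × W))
    (𝔈₁ 𝔈₂ : Set (V → W → ℝ))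
    (h𝔈₁ : ∀ E ∈ 𝔈₁, IsChannel E) (h𝔈₂ : ∀ E ∈ 𝔈₂, IsChannel E)
    (Γ : V → W → V → W → ℝ) (hΓ : IsNSBicorr Γ) (hfit : FitsHom Γ E₁ E₂)
    (hsim : ∀ E ∈ 𝔈₁, simulate Γ E ∈ 𝔈₂)
    (hsim' : ∀ F ∈ 𝔈₂, simulate (nsDual Γ) F ∈ 𝔈₁)
    (π : V → ℝ) (hπpos : ∀ v, 0 ≤ π v) (hπsum : ∑ v, π v = 1)
    (hstat : ∀ w₁ v, π v = ∑ v', (∑ w₂, Γ v' w₁ v w₂) * π v')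
    (hstat' : ∀ w₂ v, π v = ∑ v', (∑ w₁, Γ v w₁ v' w₂) * π v') :
    omegaVal E₁ π 𝔈₁ = omegaVal E₂ π 𝔈₂ := by
  classical
  have hΓpos := hΓ.1.1
  have hswap : ∀ v₂ w₁ v₁ w₂,
      (if (v₂, w₂) ∈ E₂ then (1:ℝ) else 0) * Γ v₂ w₁ v₁ w₂
        = (if (v₁, w₁) ∈ E₁ then (1:ℝ) else 0) * Γ v₂ w₁ v₁ w₂ := by
    intro v₂ w₁ v₁ w₂
    rcases eq_or_lt_of_le (hΓpos v₂ w₁ v₁ w₂) with h | h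
    · rw [← h, mul_zero, mul_zero]
    · have hf := hfit v₂ w₁ v₁ w₂ h
      by_cases h1 : (v₁, w₁) ∈ E₁
      · simp [h1, hf.mp h1]
      · have h2 : (v₂, w₂) ∉ E₂ := fun h2 => h1 (hf.mpr h2)
        simp [h1, h2]
  -- forward value preservation
  have key : ∀ 𝓔 : V → W → ℝ,
      (∑ v, ∑ w, Set.indicator E₂ (fun q => π q.1 * simulate Γ 𝓔 q.1 q.2) (v, w))
        = ∑ v, ∑ w, Set.indicator E₁ (fun q => π q.1 * 𝓔 q.1 q.2) (v, w) := by
    intro 𝓔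
    calc (∑ v, ∑ w, Set.indicator E₂ (fun q => π q.1 * simulate Γ 𝓔 q.1 q.2) (v, w))
        = ∑ v₂, ∑ w₂, ∑ v₁, ∑ w₁,
            (if (v₂, w₂) ∈ E₂ then (1:ℝ) else 0) * Γ v₂ w₁ v₁ w₂ * (π v₂ * 𝓔 v₁ w₁) := by
          refine Finset.sum_congr rfl fun v₂ _ => Finset.sum_congr rfl fun w₂ _ => ?_
          simp only [Set.indicator_apply, simulate, Finset.mul_sum]
          split
          · exact Finset.sum_congr rfl fun v₁ _ => Finset.sum_congr rfl fun w₁ _ => by ring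
          · simp
      _ = ∑ v₂, ∑ w₂, ∑ v₁, ∑ w₁,
            (if (v₁, w₁) ∈ E₁ then (1:ℝ) else 0) * Γ v₂ w₁ v₁ w₂ * (π v₂ * 𝓔 v₁ w₁) := by
          refine Finset.sum_congr rfl fun v₂ _ => Finset.sum_congr rfl fun w₂ _ =>
            Finset.sum_congr rfl fun v₁ _ => Finset.sum_congr rfl fun w₁ _ => ?_
          rw [hswap]
      _ = ∑ v₁, ∑ w₁, ∑ v₂, ∑ w₂,
            (if (v₁, w₁) ∈ E₁ then (1:ℝ) else 0) * Γ v₂ w₁ v₁ w₂ * (π v₂ * 𝓔 v₁ w₁) := by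
          exact reorder4 _
      _ = ∑ v₁, ∑ w₁,
            ((if (v₁, w₁) ∈ E₁ then (1:ℝ) else 0) * 𝓔 v₁ w₁)
              * ∑ v₂, (∑ w₂, Γ v₂ w₁ v₁ w₂) * π v₂ := by
          refine Finset.sum_congr rfl fun v₁ _ => Finset.sum_congr rfl fun w₁ _ => ?_
          simp only [Finset.mul_sum, Finset.sum_mul]
          exact Finset.sum_congr rfl fun v₂ _ => Finset.sum_congr rfl fun w₂ _ => by ring
      _ = ∑ v, ∑ w, Set.indicator E₁ (fun q => π q.1 * 𝓔 q.1 q.2) (v, w) := by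
          refine Finset.sum_congr rfl fun v₁ _ => Finset.sum_congr rfl fun w₁ _ => ?_
          rw [← hstat w₁ v₁]
          simp only [Set.indicator_apply]
          split <;> ring
  -- backward value preservation
  have key' : ∀ 𝓕 : V → W → ℝ,
      (∑ v, ∑ w, Set.indicator E₁ (fun q => π q.1 * simulate (nsDual Γ) 𝓕 q.1 q.2) (v, w))
        = ∑ v, ∑ w, Set.indicator E₂ (fun q => π q.1 * 𝓕 q.1 q.2) (v, w) := by
    intro 𝓕
    calc (∑ v, ∑ w, Set.indicator E₁ (fun q => π q.1 * simulate (nsDual Γ) 𝓕 q.1 q.2) (v, w))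
        = ∑ v₁, ∑ w₁, ∑ v₂, ∑ w₂,
            (if (v₁, w₁) ∈ E₁ then (1:ℝ) else 0) * Γ v₂ w₁ v₁ w₂ * (π v₁ * 𝓕 v₂ w₂) := by
          refine Finset.sum_congr rfl fun v₁ _ => Finset.sum_congr rfl fun w₁ _ => ?_
          simp only [Set.indicator_apply, simulate, nsDual, Finset.mul_sum]
          split
          · exact Finset.sum_congr rfl fun v₂ _ => Finset.sum_congr rfl fun w₂ _ => by ring
          · simp
      _ = ∑ v₁, ∑ w₁, ∑ v₂, ∑ w₂,
            (if (v₂, w₂) ∈ E₂ then (1:ℝ) else 0) * Γ v₂ w₁ v₁ w₂ * (π v₁ * 𝓕 v₂ w₂) := by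
          refine Finset.sum_congr rfl fun v₁ _ => Finset.sum_congr rfl fun w₁ _ =>
            Finset.sum_congr rfl fun v₂ _ => Finset.sum_congr rfl fun w₂ _ => ?_
          rw [hswap]
      _ = ∑ v₂, ∑ w₂, ∑ v₁, ∑ w₁,
            (if (v₂, w₂) ∈ E₂ then (1:ℝ) else 0) * Γ v₂ w₁ v₁ w₂ * (π v₁ * 𝓕 v₂ w₂) := by
          exact (reorder4 _).symm
      _ = ∑ v₂, ∑ w₂,
            ((if (v₂, w₂) ∈ E₂ then (1:ℝ) else 0) * 𝓕 v₂ w₂)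
              * ∑ v₁, (∑ w₁, Γ v₂ w₁ v₁ w₂) * π v₁ := by
          refine Finset.sum_congr rfl fun v₂ _ => Finset.sum_congr rfl fun w₂ _ => ?_
          simp only [Finset.mul_sum, Finset.sum_mul]
          exact Finset.sum_congr rfl fun v₁ _ => Finset.sum_congr rfl fun w₁ _ => by ring
      _ = ∑ v, ∑ w, Set.indicator E₂ (fun q => π q.1 * 𝓕 q.1 q.2) (v, w) := by
          refine Finset.sum_congr rfl fun v₂ _ => Finset.sum_congr rfl fun w₂ _ => ?_
          rw [← hstat' w₂ v₂]
          simp only [Set.indicator_apply]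
          split <;> ring
  have hset : ((fun 𝓔 => ∑ v, ∑ w, Set.indicator E₁ (fun q => π q.1 * 𝓔 q.1 q.2) (v, w)) '' 𝔈₁)
      = ((fun 𝓔 => ∑ v, ∑ w, Set.indicator E₂ (fun q => π q.1 * 𝓔 q.1 q.2) (v, w)) '' 𝔈₂) := by
    apply Set.Subset.antisymm
    · rintro x ⟨𝓔, h𝓔, rfl⟩
      exact ⟨simulate Γ 𝓔, hsim 𝓔 h𝓔, key 𝓔⟩
    · rintro x ⟨𝓕, h𝓕, rfl⟩
      exact ⟨simulate (nsDual Γ) 𝓕, hsim' 𝓕 h𝓕, key' 𝓕⟩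
  unfold omegaVal
  rw [hset]
end

section
/- Let V be a finite set, d a positive integer, and E₁, E₂ ⊆ V×V. Let P = (P_{v,w})_{v,w∈V} be a family of d×d complex matrices such that each P_{v,w} is an orthogonal projection (P_{v,w}* = P_{v,w} and P_{v,w}² = P_{v,w}), Σ_{w∈V} P_{v,w} = I_d for every v∈V, and Σ_{v∈V} P_{v,w} = I_d for every w∈V (a quantum permutation). Suppose P satisfies the intertwining relation P(A_{E₁}⊗I_d) = (A_{E₂}⊗I_d)P, i.e. Σ_{v' : (v,v')∈E₂} P_{v',w'} = Σ_{w : (w,w')∈E₁} P_{v,w} for all v, w' ∈ V. Then for all v, v', w, w' ∈ V such that exactly one of the conditions (v,v')∈E₂ and (w,w')∈E₁ holds, one has P_{v',w'}P_{v,w} = 0 and P_{v,w}P_{v',w'} = 0. -/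
open Matrix


lemma sum_ctms_eq_zero {ι : Type*} {d : ℕ} (s : Finset ι)
    (A : ι → Matrix (Fin d) (Fin d) ℂ)
    (h : ∑ i ∈ s, (A i)ᴴ * A i = 0) : ∀ i ∈ s, A i = 0 := by
  have ht : ∀ i, ((A i)ᴴ * A i).trace = ((∑ j, ∑ k, Complex.normSq (A i k j) : ℝ) : ℂ) := by
    intro i
    simp only [Matrix.trace, Matrix.diag, Matrix.mul_apply, Matrix.conjTranspose_apply]
    push_cast
    refine Finset.sum_congr rfl fun j _ => Finset.sum_congr rfl fun k _ => ?_
    rw [Complex.normSq_eq_conj_mul_self]; rfl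
  have h2 : ∑ i ∈ s, ((∑ j, ∑ k, Complex.normSq (A i k j) : ℝ) : ℂ) = 0 := by
    rw [← Finset.sum_congr rfl fun i _ => ht i, ← Matrix.trace_sum, h, Matrix.trace_zero]
  rw [← Complex.ofReal_sum] at h2
  have h3 : ∑ i ∈ s, ∑ j, ∑ k, Complex.normSq (A i k j) = 0 := by exact_mod_cast h2
  intro i hi
  have hnn : ∀ i ∈ s, (0:ℝ) ≤ ∑ j, ∑ k, Complex.normSq (A i k j) :=
    fun i _ => Finset.sum_nonneg fun j _ => Finset.sum_nonneg fun k _ => Complex.normSq_nonneg _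
  have := (Finset.sum_eq_zero_iff_of_nonneg hnn).mp h3 i hi
  ext k j
  have hjk := (Finset.sum_eq_zero_iff_of_nonneg
    (fun j _ => Finset.sum_nonneg fun k _ => Complex.normSq_nonneg _)).mp this j (Finset.mem_univ j)
  have := (Finset.sum_eq_zero_iff_of_nonneg
    (fun k _ => Complex.normSq_nonneg _)).mp hjk k (Finset.mem_univ k)
  simpa using Complex.normSq_eq_zero.mp this

/-- Projections summing to 1 are pairwise orthogonal. -/
lemma pairwise_orth {ι : Type*} [Fintype ι] [DecidableEq ι] {d : ℕ}
    (p : ι → Matrix (Fin d) (Fin d) ℂ)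
    (hsa : ∀ i, (p i)ᴴ = p i) (hidem : ∀ i, p i * p i = p i)
    (hsum : ∑ i, p i = 1) : ∀ i j, i ≠ j → p i * p j = 0 := by
  intro i j hij
  have key : ∑ k ∈ Finset.univ.erase i, (p k * p i)ᴴ * (p k * p i) = 0 := by
    have : ∑ k ∈ Finset.univ.erase i, p i * (p k * p i) = 0 := by
      have expand : p i * ((∑ k, p k) * p i) = p i := by
        rw [hsum, one_mul, hidem]
      rw [Finset.sum_mul, Finset.mul_sum, ← Finset.add_sum_erase _ _ (Finset.mem_univ i)] at expand
      have : p i * (p i * p i) = p i := by rw [hidem, hidem]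
      rw [this] at expand
      exact (add_eq_left).mp expand
    calc ∑ k ∈ Finset.univ.erase i, (p k * p i)ᴴ * (p k * p i)
        = ∑ k ∈ Finset.univ.erase i, p i * (p k * p i) := by
          refine Finset.sum_congr rfl fun k _ => ?_
          rw [Matrix.conjTranspose_mul, hsa, hsa, mul_assoc, ← mul_assoc (p k) (p k), hidem]
      _ = 0 := this
  have := sum_ctms_eq_zero _ _ key j (Finset.mem_erase.mpr ⟨fun h => hij h.symm, Finset.mem_univ j⟩)
  -- this : p j * p i = 0
  have h2 : p i * p j = 0 := by
    have := congrArg Matrix.conjTranspose this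
    simpa [Matrix.conjTranspose_mul, hsa] using this
  exact h2

/-- If a quantum permutation `P` (with `d × d` matrix entries) intertwines the incidence
matrices of `E₁` and `E₂`, then `P_{v',w'} P_{v,w} = 0 = P_{v,w} P_{v',w'}` whenever
exactly one of `(v,v') ∈ E₂` and `(w,w') ∈ E₁` holds. -/
theorem quantumPermutation_intertwine_orthogonal
    {V : Type*} [Fintype V] (d : ℕ) (hd : 0 < d)
    (E₁ E₂ : Set (V × V)) [DecidablePred (· ∈ E₁)] [DecidablePred (· ∈ E₂)]
    (P : V → V → Matrix (Fin d) (Fin d) ℂ)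
    (hsa : ∀ v w, (P v w)ᴴ = P v w)
    (hidem : ∀ v w, P v w * P v w = P v w)
    (hrow : ∀ v, ∑ w, P v w = 1)
    (hcol : ∀ w, ∑ v, P v w = 1)
    (hint : ∀ v w', (∑ v', if (v, v') ∈ E₂ then P v' w' else 0) =
                    (∑ w, if (w, w') ∈ E₁ then P v w else 0)) :
    ∀ v v' w w', Xor' ((v, v') ∈ E₂) ((w, w') ∈ E₁) →
      P v' w' * P v w = 0 ∧ P v w * P v' w' = 0 := by
  classical
  intro v v' w w' hxor
  -- column orthogonality
  have col : ∀ w₀ a b, a ≠ b → P a w₀ * P b w₀ = 0 := fun w₀ a b hab =>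
    pairwise_orth (fun u => P u w₀) (fun u => hsa u w₀) (fun u => hidem u w₀) (hcol w₀) a b hab
  -- row orthogonality
  have row : ∀ v₀ a b, a ≠ b → P v₀ a * P v₀ b = 0 := fun v₀ a b hab =>
    pairwise_orth (fun u => P v₀ u) (fun u => hsa v₀ u) (fun u => hidem v₀ u) (hrow v₀) a b hab
  set Q : Matrix (Fin d) (Fin d) ℂ := ∑ u, if (v, u) ∈ E₂ then P u w' else 0 with hQ
  have hQ' : Q = ∑ u, if (u, w') ∈ E₁ then P v u else 0 := hint v w'
  rcases hxor with ⟨h2, h1⟩ | ⟨h1, h2⟩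
  · -- (v,v') ∈ E₂, (w,w') ∉ E₁
    have hQr : Q * P v' w' = P v' w' := by
      rw [hQ, Finset.sum_mul]
      rw [Finset.sum_eq_single v']
      · simp [h2, hidem]
      · intro u _ hu
        by_cases hc : (v, u) ∈ E₂ <;> simp [hc, col w' u v' hu]
      · simp
    have hlQ : P v' w' * Q = P v' w' := by
      rw [hQ, Finset.mul_sum]
      rw [Finset.sum_eq_single v']
      · simp [h2, hidem]
      · intro u _ hu
        by_cases hc : (v, u) ∈ E₂ <;> simp [hc, col w' v' u (Ne.symm hu)]
      · simp
    have hPQ : P v w * Q = 0 := by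
      rw [hQ', Finset.mul_sum]
      refine Finset.sum_eq_zero fun u _ => ?_
      by_cases hc : (u, w') ∈ E₁
      · have : w ≠ u := fun h => h1 (h ▸ hc)
        simp [hc, row v w u this]
      · simp [hc]
    have hQP : Q * P v w = 0 := by
      rw [hQ', Finset.sum_mul]
      refine Finset.sum_eq_zero fun u _ => ?_
      by_cases hc : (u, w') ∈ E₁
      · have : u ≠ w := fun h => h1 (h ▸ hc)
        simp [hc, row v u w this]
      · simp [hc]
    constructor
    · rw [← hlQ, mul_assoc, hQP, mul_zero]
    · rw [← hQr, ← mul_assoc, hPQ, zero_mul]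
  · -- (w,w') ∈ E₁, (v,v') ∉ E₂
    have hQr : Q * P v w = P v w := by
      rw [hQ', Finset.sum_mul]
      rw [Finset.sum_eq_single w]
      · simp [h1, hidem]
      · intro u _ hu
        by_cases hc : (u, w') ∈ E₁ <;> simp [hc, row v u w hu]
      · simp
    have hlQ : P v w * Q = P v w := by
      rw [hQ', Finset.mul_sum]
      rw [Finset.sum_eq_single w]
      · simp [h1, hidem]
      · intro u _ hu
        by_cases hc : (u, w') ∈ E₁ <;> simp [hc, row v w u (Ne.symm hu)]
      · simp
    have hPQ : P v' w' * Q = 0 := by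
      rw [hQ, Finset.mul_sum]
      refine Finset.sum_eq_zero fun u _ => ?_
      by_cases hc : (v, u) ∈ E₂
      · have : v' ≠ u := fun h => h2 (h ▸ hc)
        simp [hc, col w' v' u this]
      · simp [hc]
    have hQP : Q * P v' w' = 0 := by
      rw [hQ, Finset.sum_mul]
      refine Finset.sum_eq_zero fun u _ => ?_
      by_cases hc : (v, u) ∈ E₂
      · have : u ≠ v' := fun h => h2 (h ▸ hc)
        simp [hc, col w' u v' this]
      · simp [hc]
    constructor
    · rw [← hQr, ← mul_assoc, hPQ, zero_mul]
    · rw [← hlQ, mul_assoc, hQP, mul_zero]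
end

section
/- Let X and Y be finite sets, Γ an SNS bicorrelation over (X×Y, X×Y, X×Y, X×Y), and 𝓔 an NS bicorrelation over (X,Y,X,Y). Then Γ[𝓔]* = Γ*[𝓔*], and Γ[𝓔] is an NS bicorrelation over (X,Y,X,Y). -/
/-- An NS correlation over `(X, Y, X, Y)`: `p x y a b` stands for `p(a,b|x,y)`. -/
def IsNSCorr4 {X Y A B : Type*} [Fintype A] [Fintype B]
    (p : X → Y → A → B → ℝ) : Prop :=
  (∀ x y a b, 0 ≤ p x y a b) ∧
  (∀ x y, ∑ a, ∑ b, p x y a b = 1) ∧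
  (∀ x y y' a, ∑ b, p x y a b = ∑ b, p x y' a b) ∧
  (∀ x x' y b, ∑ a, p x y a b = ∑ a, p x' y a b)

/-- The dual `p*` of a correlation over `(X, Y, X, Y)`: `p*(x,y|a,b) = p(a,b|x,y)`. -/
def dual4 {X Y : Type*} (p : X → Y → X → Y → ℝ) : X → Y → X → Y → ℝ :=
  fun a b x y => p x y a b

/-- An NS bicorrelation over `(X, Y, X, Y)`: a unital NS correlation whose dual is
again an NS correlation. -/
def IsNSBicorr4 {X Y : Type*} [Fintype X] [Fintype Y]
    (p : X → Y → X → Y → ℝ) : Prop :=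
  IsNSCorr4 p ∧ (∀ a b, ∑ x, ∑ y, p x y a b = 1) ∧ IsNSCorr4 (dual4 p)

/-- A strongly no-signalling (SNS) correlation over `(X×Y, X×Y, X×Y, X×Y)`. -/
def IsSNSCorr {X₂ Y₂ A₁ B₁ X₁ Y₁ A₂ B₂ : Type*}
    [Fintype X₁] [Fintype Y₁] [Fintype A₂] [Fintype B₂]
    (Γ : X₂ → Y₂ → A₁ → B₁ → X₁ → Y₁ → A₂ → B₂ → ℝ) : Prop :=
  (∀ x₂ y₂ a₁ b₁ x₁ y₁ a₂ b₂, 0 ≤ Γ x₂ y₂ a₁ b₁ x₁ y₁ a₂ b₂) ∧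
  (∀ x₂ y₂ a₁ b₁, ∑ x₁, ∑ y₁, ∑ a₂, ∑ b₂, Γ x₂ y₂ a₁ b₁ x₁ y₁ a₂ b₂ = 1) ∧
  (∀ x₂ y₂ a₁ b₁ b₁' x₁ y₁ a₂,
    ∑ b₂, Γ x₂ y₂ a₁ b₁ x₁ y₁ a₂ b₂ = ∑ b₂, Γ x₂ y₂ a₁ b₁' x₁ y₁ a₂ b₂) ∧
  (∀ x₂ y₂ a₁ a₁' b₁ x₁ y₁ b₂,
    ∑ a₂, Γ x₂ y₂ a₁ b₁ x₁ y₁ a₂ b₂ = ∑ a₂, Γ x₂ y₂ a₁' b₁ x₁ y₁ a₂ b₂) ∧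
  (∀ x₂ y₂ y₂' a₁ b₁ x₁ a₂ b₂,
    ∑ y₁, Γ x₂ y₂ a₁ b₁ x₁ y₁ a₂ b₂ = ∑ y₁, Γ x₂ y₂' a₁ b₁ x₁ y₁ a₂ b₂) ∧
  (∀ x₂ x₂' y₂ a₁ b₁ y₁ a₂ b₂,
    ∑ x₁, Γ x₂ y₂ a₁ b₁ x₁ y₁ a₂ b₂ = ∑ x₁, Γ x₂' y₂ a₁ b₁ x₁ y₁ a₂ b₂)

/-- The dual `Γ*` of an SNS correlation over `(X×Y, X×Y, X×Y, X×Y)`: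
`Γ*(x₂y₂, a₁b₁ | x₁y₁, a₂b₂) = Γ(x₁y₁, a₂b₂ | x₂y₂, a₁b₁)`. -/
def dualSNS {X Y : Type*} (Γ : X → Y → X → Y → X → Y → X → Y → ℝ) :
    X → Y → X → Y → X → Y → X → Y → ℝ :=
  fun x₁ y₁ a₂ b₂ x₂ y₂ a₁ b₁ => Γ x₂ y₂ a₁ b₁ x₁ y₁ a₂ b₂

/-- An SNS bicorrelation: a unital SNS correlation whose dual is again SNS. -/
def IsSNSBicorr {X Y : Type*} [Fintype X] [Fintype Y]
    (Γ : X → Y → X → Y → X → Y → X → Y → ℝ) : Prop :=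
  IsSNSCorr Γ ∧
  (∀ x₁ y₁ a₂ b₂, ∑ x₂, ∑ y₂, ∑ a₁, ∑ b₁, Γ x₂ y₂ a₁ b₁ x₁ y₁ a₂ b₂ = 1) ∧
  IsSNSCorr (dualSNS Γ)

/-- The simulated correlation `Γ[𝓔]`. -/
def simulateSNS {X₂ Y₂ A₁ B₁ X₁ Y₁ A₂ B₂ : Type*}
    [Fintype X₁] [Fintype Y₁] [Fintype A₁] [Fintype B₁]
    (Γ : X₂ → Y₂ → A₁ → B₁ → X₁ → Y₁ → A₂ → B₂ → ℝ)
    (E : X₁ → Y₁ → A₁ → B₁ → ℝ) : X₂ → Y₂ → A₂ → B₂ → ℝ :=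
  fun x₂ y₂ a₂ b₂ => ∑ x₁, ∑ y₁, ∑ a₁, ∑ b₁, Γ x₂ y₂ a₁ b₁ x₁ y₁ a₂ b₂ * E x₁ y₁ a₁ b₁

private lemma push2' {M : Type*} [AddCommMonoid M] {α β γ : Type*}
    [Fintype α] [Fintype β] [Fintype γ] (f : α → β → γ → M) :
    ∑ a, ∑ b, ∑ c, f a b c = ∑ b, ∑ c, ∑ a, f a b c := by
  rw [Finset.sum_comm]
  exact Finset.sum_congr rfl fun b _ => Finset.sum_comm

private lemma push3' {M : Type*} [AddCommMonoid M] {α β γ δ : Type*}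
    [Fintype α] [Fintype β] [Fintype γ] [Fintype δ] (f : α → β → γ → δ → M) :
    ∑ a, ∑ b, ∑ c, ∑ d, f a b c d = ∑ b, ∑ c, ∑ d, ∑ a, f a b c d := by
  rw [Finset.sum_comm]
  exact Finset.sum_congr rfl fun b _ => push2' _

private lemma push4' {M : Type*} [AddCommMonoid M] {α β γ δ ε : Type*}
    [Fintype α] [Fintype β] [Fintype γ] [Fintype δ] [Fintype ε]
    (f : α → β → γ → δ → ε → M) :
    ∑ a, ∑ b, ∑ c, ∑ d, ∑ e, f a b c d e = ∑ b, ∑ c, ∑ d, ∑ e, ∑ a, f a b c d e := by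
  rw [Finset.sum_comm]
  exact Finset.sum_congr rfl fun b _ => push3' _

private lemma swap4' {M : Type*} [AddCommMonoid M] {α β γ δ : Type*}
    [Fintype α] [Fintype β] [Fintype γ] [Fintype δ] (f : α → β → γ → δ → M) :
    ∑ a, ∑ b, ∑ c, ∑ d, f a b c d = ∑ c, ∑ d, ∑ a, ∑ b, f a b c d := by
  rw [push3' f, push2' fun b c d => ∑ a, f a b c d]
  exact Finset.sum_congr rfl fun c _ => Finset.sum_congr rfl fun d _ => Finset.sum_comm
private lemma simCorrXY {X Y : Type*} [Fintype X] [Fintype Y]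
    (Γ : X → Y → X → Y → X → Y → X → Y → ℝ) (hΓ : IsSNSCorr Γ)
    (E : X → Y → X → Y → ℝ) (hE : IsNSCorr4 E) :
    IsNSCorr4 (simulateSNS Γ E) := by
  obtain ⟨hΓ0, hΓn, hΓb, hΓa, hΓy, hΓx⟩ := hΓ
  obtain ⟨hE0, hEn, hEb, hEa⟩ := hE
  refine ⟨?_, ?_, ?_, ?_⟩
  · intro x y a b
    exact Finset.sum_nonneg fun x₁ _ => Finset.sum_nonneg fun y₁ _ =>
      Finset.sum_nonneg fun a₁ _ => Finset.sum_nonneg fun b₁ _ =>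
        mul_nonneg (hΓ0 x y a₁ b₁ x₁ y₁ a b) (hE0 x₁ y₁ a₁ b₁)
  · intro x y
    have key : ∀ (a₁ : X) (b₁ : Y) (x₁ : X) (y₁ : Y),
        ∑ a₂, ∑ b₂, Γ x y a₁ b₁ x₁ y₁ a₂ b₂ = ∑ a₂, ∑ b₂, Γ x y x y x₁ y₁ a₂ b₂ := by
      intro a₁ b₁ x₁ y₁
      calc ∑ a₂, ∑ b₂, Γ x y a₁ b₁ x₁ y₁ a₂ b₂
          = ∑ a₂, ∑ b₂, Γ x y a₁ y x₁ y₁ a₂ b₂ :=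
            Finset.sum_congr rfl fun a₂ _ => hΓb x y a₁ b₁ y x₁ y₁ a₂
        _ = ∑ b₂, ∑ a₂, Γ x y a₁ y x₁ y₁ a₂ b₂ := Finset.sum_comm
        _ = ∑ b₂, ∑ a₂, Γ x y x y x₁ y₁ a₂ b₂ :=
            Finset.sum_congr rfl fun b₂ _ => hΓa x y a₁ x y x₁ y₁ b₂
        _ = ∑ a₂, ∑ b₂, Γ x y x y x₁ y₁ a₂ b₂ := Finset.sum_comm
    simp only [simulateSNS]
    calc ∑ a₂, ∑ b₂, ∑ x₁, ∑ y₁, ∑ a₁, ∑ b₁, Γ x y a₁ b₁ x₁ y₁ a₂ b₂ * E x₁ y₁ a₁ b₁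
        = ∑ a₂, ∑ x₁, ∑ y₁, ∑ a₁, ∑ b₁, ∑ b₂, Γ x y a₁ b₁ x₁ y₁ a₂ b₂ * E x₁ y₁ a₁ b₁ :=
          Finset.sum_congr rfl fun a₂ _ => push4' _
      _ = ∑ x₁, ∑ y₁, ∑ a₁, ∑ b₁, ∑ a₂, ∑ b₂, Γ x y a₁ b₁ x₁ y₁ a₂ b₂ * E x₁ y₁ a₁ b₁ := push4' _
      _ = ∑ x₁, ∑ y₁, ∑ a₁, ∑ b₁, (∑ a₂, ∑ b₂, Γ x y a₁ b₁ x₁ y₁ a₂ b₂) * E x₁ y₁ a₁ b₁ := by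
          simp only [← Finset.sum_mul]
      _ = ∑ x₁, ∑ y₁, ∑ a₁, ∑ b₁, (∑ a₂, ∑ b₂, Γ x y x y x₁ y₁ a₂ b₂) * E x₁ y₁ a₁ b₁ :=
          Finset.sum_congr rfl fun x₁ _ => Finset.sum_congr rfl fun y₁ _ =>
            Finset.sum_congr rfl fun a₁ _ => Finset.sum_congr rfl fun b₁ _ => by
              rw [key a₁ b₁ x₁ y₁]
      _ = ∑ x₁, ∑ y₁, (∑ a₂, ∑ b₂, Γ x y x y x₁ y₁ a₂ b₂) * (∑ a₁, ∑ b₁, E x₁ y₁ a₁ b₁) := by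
          simp only [← Finset.mul_sum]
      _ = ∑ x₁, ∑ y₁, ∑ a₂, ∑ b₂, Γ x y x y x₁ y₁ a₂ b₂ := by
          simp only [hEn, mul_one]
      _ = 1 := hΓn x y x y
  · intro x₂ y₂ y₂' a₂
    have key : ∀ y : Y, ∑ b₂, simulateSNS Γ E x₂ y a₂ b₂
        = ∑ x₁, ∑ a₁, (∑ b₂, ∑ y₁, Γ x₂ y₂' a₁ y₂' x₁ y₁ a₂ b₂) * (∑ b₁, E x₁ y₂' a₁ b₁) := by
      intro y
      simp only [simulateSNS]
      calc ∑ b₂, ∑ x₁, ∑ y₁, ∑ a₁, ∑ b₁, Γ x₂ y a₁ b₁ x₁ y₁ a₂ b₂ * E x₁ y₁ a₁ b₁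
          = ∑ x₁, ∑ y₁, ∑ a₁, ∑ b₁, ∑ b₂, Γ x₂ y a₁ b₁ x₁ y₁ a₂ b₂ * E x₁ y₁ a₁ b₁ := push4' _
        _ = ∑ x₁, ∑ y₁, ∑ a₁, ∑ b₁, (∑ b₂, Γ x₂ y a₁ b₁ x₁ y₁ a₂ b₂) * E x₁ y₁ a₁ b₁ := by
            simp only [← Finset.sum_mul]
        _ = ∑ x₁, ∑ y₁, ∑ a₁, ∑ b₁, (∑ b₂, Γ x₂ y a₁ y₂' x₁ y₁ a₂ b₂) * E x₁ y₁ a₁ b₁ :=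
            Finset.sum_congr rfl fun x₁ _ => Finset.sum_congr rfl fun y₁ _ =>
              Finset.sum_congr rfl fun a₁ _ => Finset.sum_congr rfl fun b₁ _ => by
                rw [hΓb x₂ y a₁ b₁ y₂' x₁ y₁ a₂]
        _ = ∑ x₁, ∑ y₁, ∑ a₁, (∑ b₂, Γ x₂ y a₁ y₂' x₁ y₁ a₂ b₂) * (∑ b₁, E x₁ y₁ a₁ b₁) := by
            simp only [← Finset.mul_sum]
        _ = ∑ x₁, ∑ y₁, ∑ a₁, (∑ b₂, Γ x₂ y a₁ y₂' x₁ y₁ a₂ b₂) * (∑ b₁, E x₁ y₂' a₁ b₁) :=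
            Finset.sum_congr rfl fun x₁ _ => Finset.sum_congr rfl fun y₁ _ =>
              Finset.sum_congr rfl fun a₁ _ => by rw [hEb x₁ y₁ y₂' a₁]
        _ = ∑ x₁, ∑ a₁, ∑ y₁, (∑ b₂, Γ x₂ y a₁ y₂' x₁ y₁ a₂ b₂) * (∑ b₁, E x₁ y₂' a₁ b₁) :=
            Finset.sum_congr rfl fun x₁ _ => Finset.sum_comm
        _ = ∑ x₁, ∑ a₁, (∑ y₁, ∑ b₂, Γ x₂ y a₁ y₂' x₁ y₁ a₂ b₂) * (∑ b₁, E x₁ y₂' a₁ b₁) := by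
            simp only [← Finset.sum_mul]
        _ = ∑ x₁, ∑ a₁, (∑ b₂, ∑ y₁, Γ x₂ y a₁ y₂' x₁ y₁ a₂ b₂) * (∑ b₁, E x₁ y₂' a₁ b₁) :=
            Finset.sum_congr rfl fun x₁ _ => Finset.sum_congr rfl fun a₁ _ => by
              rw [Finset.sum_comm]
        _ = ∑ x₁, ∑ a₁, (∑ b₂, ∑ y₁, Γ x₂ y₂' a₁ y₂' x₁ y₁ a₂ b₂) * (∑ b₁, E x₁ y₂' a₁ b₁) :=
            Finset.sum_congr rfl fun x₁ _ => Finset.sum_congr rfl fun a₁ _ => by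
              rw [show (∑ b₂, ∑ y₁, Γ x₂ y a₁ y₂' x₁ y₁ a₂ b₂)
                    = ∑ b₂, ∑ y₁, Γ x₂ y₂' a₁ y₂' x₁ y₁ a₂ b₂ from
                Finset.sum_congr rfl fun b₂ _ => hΓy x₂ y y₂' a₁ y₂' x₁ a₂ b₂]
    rw [key y₂, key y₂']
  · intro x₂ x₂' y₂ b₂
    have key : ∀ x : X, ∑ a₂, simulateSNS Γ E x y₂ a₂ b₂
        = ∑ y₁, ∑ b₁, (∑ a₂, ∑ x₁, Γ x₂' y₂ x₂' b₁ x₁ y₁ a₂ b₂) * (∑ a₁, E x₂' y₁ a₁ b₁) := by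
      intro x
      simp only [simulateSNS]
      calc ∑ a₂, ∑ x₁, ∑ y₁, ∑ a₁, ∑ b₁, Γ x y₂ a₁ b₁ x₁ y₁ a₂ b₂ * E x₁ y₁ a₁ b₁
          = ∑ x₁, ∑ y₁, ∑ a₁, ∑ b₁, ∑ a₂, Γ x y₂ a₁ b₁ x₁ y₁ a₂ b₂ * E x₁ y₁ a₁ b₁ := push4' _
        _ = ∑ x₁, ∑ y₁, ∑ a₁, ∑ b₁, (∑ a₂, Γ x y₂ a₁ b₁ x₁ y₁ a₂ b₂) * E x₁ y₁ a₁ b₁ := by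
            simp only [← Finset.sum_mul]
        _ = ∑ x₁, ∑ y₁, ∑ a₁, ∑ b₁, (∑ a₂, Γ x y₂ x₂' b₁ x₁ y₁ a₂ b₂) * E x₁ y₁ a₁ b₁ :=
            Finset.sum_congr rfl fun x₁ _ => Finset.sum_congr rfl fun y₁ _ =>
              Finset.sum_congr rfl fun a₁ _ => Finset.sum_congr rfl fun b₁ _ => by
                rw [hΓa x y₂ a₁ x₂' b₁ x₁ y₁ b₂]
        _ = ∑ x₁, ∑ y₁, ∑ b₁, ∑ a₁, (∑ a₂, Γ x y₂ x₂' b₁ x₁ y₁ a₂ b₂) * E x₁ y₁ a₁ b₁ :=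
            Finset.sum_congr rfl fun x₁ _ => Finset.sum_congr rfl fun y₁ _ => Finset.sum_comm
        _ = ∑ x₁, ∑ y₁, ∑ b₁, (∑ a₂, Γ x y₂ x₂' b₁ x₁ y₁ a₂ b₂) * (∑ a₁, E x₁ y₁ a₁ b₁) := by
            simp only [← Finset.mul_sum]
        _ = ∑ x₁, ∑ y₁, ∑ b₁, (∑ a₂, Γ x y₂ x₂' b₁ x₁ y₁ a₂ b₂) * (∑ a₁, E x₂' y₁ a₁ b₁) :=
            Finset.sum_congr rfl fun x₁ _ => Finset.sum_congr rfl fun y₁ _ =>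
              Finset.sum_congr rfl fun b₁ _ => by rw [hEa x₁ x₂' y₁ b₁]
        _ = ∑ y₁, ∑ b₁, ∑ x₁, (∑ a₂, Γ x y₂ x₂' b₁ x₁ y₁ a₂ b₂) * (∑ a₁, E x₂' y₁ a₁ b₁) :=
            push2' _
        _ = ∑ y₁, ∑ b₁, (∑ x₁, ∑ a₂, Γ x y₂ x₂' b₁ x₁ y₁ a₂ b₂) * (∑ a₁, E x₂' y₁ a₁ b₁) := by
            simp only [← Finset.sum_mul]
        _ = ∑ y₁, ∑ b₁, (∑ a₂, ∑ x₁, Γ x y₂ x₂' b₁ x₁ y₁ a₂ b₂) * (∑ a₁, E x₂' y₁ a₁ b₁) :=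
            Finset.sum_congr rfl fun y₁ _ => Finset.sum_congr rfl fun b₁ _ => by
              rw [Finset.sum_comm]
        _ = ∑ y₁, ∑ b₁, (∑ a₂, ∑ x₁, Γ x₂' y₂ x₂' b₁ x₁ y₁ a₂ b₂) * (∑ a₁, E x₂' y₁ a₁ b₁) :=
            Finset.sum_congr rfl fun y₁ _ => Finset.sum_congr rfl fun b₁ _ => by
              rw [show (∑ a₂, ∑ x₁, Γ x y₂ x₂' b₁ x₁ y₁ a₂ b₂)
                    = ∑ a₂, ∑ x₁, Γ x₂' y₂ x₂' b₁ x₁ y₁ a₂ b₂ from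
                Finset.sum_congr rfl fun a₂ _ => hΓx x x₂' y₂ x₂' b₁ y₁ a₂ b₂]
    rw [key x₂, key x₂']
private def opSNS {X Y : Type*} (Γ : X → Y → X → Y → X → Y → X → Y → ℝ) :
    X → Y → X → Y → X → Y → X → Y → ℝ :=
  fun u1 u2 u3 u4 u5 u6 u7 u8 => Γ u7 u8 u5 u6 u3 u4 u1 u2

/-- For an SNS bicorrelation `Γ` and an NS bicorrelation `𝓔`, one has
`Γ[𝓔]* = Γ*[𝓔*]` and `Γ[𝓔]` is an NS bicorrelation. -/
theorem simulateSNS_bicorr {X Y : Type*} [Fintype X] [Fintype Y]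
    (Γ : X → Y → X → Y → X → Y → X → Y → ℝ) (hΓ : IsSNSBicorr Γ)
    (E : X → Y → X → Y → ℝ) (hE : IsNSBicorr4 E) :
    (∀ x₂ y₂ a₂ b₂,
      dual4 (simulateSNS Γ E) a₂ b₂ x₂ y₂ =
        ∑ a₁, ∑ b₁, ∑ x₁, ∑ y₁,
          dualSNS Γ x₁ y₁ a₂ b₂ x₂ y₂ a₁ b₁ * dual4 E a₁ b₁ x₁ y₁) ∧
    IsNSBicorr4 (simulateSNS Γ E) := by
  obtain ⟨hΓc, hΓu, hΓ0', hΓn', hΓb', hΓa', hΓy', hΓx'⟩ := hΓ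
  obtain ⟨hEc, hEu, hEd⟩ := hE
  have hΓop : IsSNSCorr (opSNS Γ) := by
    refine ⟨?_, ?_, ?_, ?_, ?_, ?_⟩
    · intro u1 u2 u3 u4 u5 u6 u7 u8
      exact hΓc.1 u7 u8 u5 u6 u3 u4 u1 u2
    · intro u1 u2 u3 u4
      calc ∑ u5, ∑ u6, ∑ u7, ∑ u8, opSNS Γ u1 u2 u3 u4 u5 u6 u7 u8
          = ∑ u7, ∑ u8, ∑ u5, ∑ u6, Γ u7 u8 u5 u6 u3 u4 u1 u2 := swap4' _
        _ = 1 := hΓu u3 u4 u1 u2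
    · intro u1 u2 u3 u4 u4' u5 u6 u7
      exact hΓy' u3 u4 u4' u1 u2 u7 u5 u6
    · intro u1 u2 u3 u3' u4 u5 u6 u8
      exact hΓx' u3 u3' u4 u1 u2 u8 u5 u6
    · intro u1 u2 u2' u3 u4 u5 u7 u8
      exact hΓb' u3 u4 u1 u2 u2' u7 u8 u5
    · intro u1 u1' u2 u3 u4 u6 u7 u8
      exact hΓa' u3 u4 u1 u1' u2 u7 u8 u6
  have hq : ∀ (a : X) (b : Y) (x : X) (y : Y),
      simulateSNS Γ E x y a b = simulateSNS (opSNS Γ) (dual4 E) a b x y := by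
    intro a b x y
    show (∑ x₁, ∑ y₁, ∑ a₁, ∑ b₁, Γ x y a₁ b₁ x₁ y₁ a b * E x₁ y₁ a₁ b₁)
        = ∑ p, ∑ q, ∑ r, ∑ s, Γ x y p q r s a b * E r s p q
    exact swap4' _
  have hsimop : IsNSCorr4 (simulateSNS (opSNS Γ) (dual4 E)) :=
    simCorrXY (opSNS Γ) hΓop (dual4 E) hEd
  have hsim : IsNSCorr4 (simulateSNS Γ E) := simCorrXY Γ hΓc E hEc
  refine ⟨?_, hsim, ?_, ?_⟩
  · intro x₂ y₂ a₂ b₂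
    show (∑ x₁, ∑ y₁, ∑ a₁, ∑ b₁, Γ x₂ y₂ a₁ b₁ x₁ y₁ a₂ b₂ * E x₁ y₁ a₁ b₁)
        = ∑ a₁, ∑ b₁, ∑ x₁, ∑ y₁, Γ x₂ y₂ a₁ b₁ x₁ y₁ a₂ b₂ * E x₁ y₁ a₁ b₁
    exact swap4' _
  · intro a b
    calc ∑ x, ∑ y, simulateSNS Γ E x y a b
        = ∑ x, ∑ y, simulateSNS (opSNS Γ) (dual4 E) a b x y :=
          Finset.sum_congr rfl fun x _ => Finset.sum_congr rfl fun y _ => hq a b x y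
      _ = 1 := hsimop.2.1 a b
  · have h : dual4 (simulateSNS Γ E) = simulateSNS (opSNS Γ) (dual4 E) := by
      funext a b x y
      exact hq a b x y
    rw [h]
    exact hsimop
end
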